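/- For every integer k ≥ 3, the complete graph K_k is weakly σ-stable. -/

import Mathlib

open SimpleGraph

/-- The degree of a vertex, defined without decidability assumptions. -/
noncomputable def gdeg {V : Type*} [Fintype V] (G : SimpleGraph V) (v : V) : ℕ :=
  {w | G.Adj v w}.ncard

/-- The multiset of vertex degrees of a finite simple graph. -/
noncomputable def degMultiset {V : Type*} [Fintype V] (G : SimpleGraph V) : Multiset ℕ :=
  Finset.univ.val.map (gdeg G)

/-- A finite sequence of naturals is *graphic* if it is the degree sequence of
a finite simple graph (a *realization*). -/
def IsGraphic (π : List ℕ) : Prop :=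
  ∃ G : SimpleGraph (Fin π.length), degMultiset G = (π : Multiset ℕ)

/-- `H` is contained in `G` as a (not necessarily induced) subgraph. -/
def ContainsSub {V : Type*} {W : Type*} (H : SimpleGraph V) (G : SimpleGraph W) : Prop :=
  ∃ f : V → W, Function.Injective f ∧ ∀ ⦃a b⦄, H.Adj a b → G.Adj (f a) (f b)

/-- `π` is *potentially `H`-graphic*: some realization of `π` contains `H` as a subgraph. -/
def PotentiallyGraphic {V : Type*} (H : SimpleGraph V) (π : List ℕ) : Prop :=
  ∃ G : SimpleGraph (Fin π.length), degMultiset G = (π : Multiset ℕ) ∧ ContainsSub H G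

/-- The potential number `σ(H,n)`: the minimum even integer such that every
(nonincreasing) graphic sequence of length `n` with sum at least that integer is
potentially `H`-graphic. -/
noncomputable def potentialNumber {V : Type*} (H : SimpleGraph V) (n : ℕ) : ℕ :=
  sInf {s : ℕ | Even s ∧ ∀ π : List ℕ, π.length = n → π.Pairwise (· ≥ ·) →
      IsGraphic π → s ≤ π.sum → PotentiallyGraphic H π}

/-- The maximum degree `Δ(G)` of a finite graph. -/
noncomputable def maxDeg {V : Type*} [Fintype V] (G : SimpleGraph V) : ℕ :=
  Finset.univ.sup (gdeg G)

/-- The independence number `α(G)`. -/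
noncomputable def indepNum {V : Type*} [Fintype V] (G : SimpleGraph V) : ℕ :=
  sSup {k | ∃ s : Finset V, s.card = k ∧ (s : Set V).Pairwise fun a b => ¬ G.Adj a b}

/-- `∇_i(H)`: the minimum of `Δ(F)` over induced subgraphs `F` of `H` of order `i`. -/
noncomputable def nabla {V : Type*} [Fintype V] (H : SimpleGraph V) (i : ℕ) : ℕ :=
  sInf {d | ∃ s : Finset V, s.card = i ∧ maxDeg (SimpleGraph.induce (s : Set V) H) = d}

/-- The sequence `π̃_i(H,n) = ((n-1)^{k-i}, (k-i+∇_i(H)-1)^{n-k+i})`, with the last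
term reduced by one if the sum would otherwise be odd. -/
noncomputable def tildePi {V : Type*} [Fintype V] (H : SimpleGraph V) (i n : ℕ) : List ℕ :=
  let k := Fintype.card V
  let d := k - i + nabla H i - 1
  let base := List.replicate (k - i) (n - 1) ++ List.replicate (n - k + i) d
  if Even base.sum then base else base.dropLast ++ [d - 1]

/-- `σ̃_i(H) = 2(k-i) + ∇_i(H) - 1`. -/
noncomputable def sigmaTildeI {V : Type*} [Fintype V] (H : SimpleGraph V) (i : ℕ) : ℕ :=
  2 * (Fintype.card V - i) + nabla H i - 1

/-- `σ̃(H) = max_{α(H)+1 ≤ i ≤ k} σ̃_i(H)`. -/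
noncomputable def sigmaTilde {V : Type*} [Fintype V] (H : SimpleGraph V) : ℕ :=
  (Finset.Icc (_root_.indepNum H + 1) (Fintype.card V)).sup (sigmaTildeI H)

/-- The family `P(H,n)` of extremal nonrealizing sequences. -/
noncomputable def potSet {V : Type*} [Fintype V] (H : SimpleGraph V) (n : ℕ) : Set (List ℕ) :=
  {π | ∃ i ∈ Finset.Icc (_root_.indepNum H + 1) (Fintype.card V),
      sigmaTildeI H i = sigmaTilde H ∧ π = tildePi H i n}

/-- `i*(H)`: the least index `i ∈ {α(H)+1, …, k}` with `σ̃_i(H) = σ̃(H)`. -/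
noncomputable def iStar {V : Type*} [Fintype V] (H : SimpleGraph V) : ℕ :=
  sInf {i | i ∈ Finset.Icc (_root_.indepNum H + 1) (Fintype.card V) ∧ sigmaTildeI H i = sigmaTilde H}

/-- `‖π₁ - π₂‖ = Σ_j |x_j - y_j|`, padding the shorter sequence with zeros. -/
def seqDist (π₁ π₂ : List ℕ) : ℕ :=
  ((List.range (max π₁.length π₂.length)).map fun j =>
    Nat.dist (π₁.getD j 0) (π₂.getD j 0)).sum

/-- `H` is stable with respect to the potential number (σ-stable). -/
def SigmaStable {V : Type*} [Fintype V] (H : SimpleGraph V) : Prop :=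
  ∀ ε : ℝ, 0 < ε → ∃ δ : ℝ, 0 < δ ∧ ∃ n₀ : ℕ, ∀ n : ℕ, n₀ ≤ n →
    ∀ π : List ℕ, π.length = n → π.Pairwise (· ≥ ·) → IsGraphic π →
      ¬ PotentiallyGraphic H π →
      (potentialNumber H n : ℝ) - δ * n ≤ (π.sum : ℝ) →
      ∃ π' ∈ potSet H n, (seqDist π π' : ℝ) < ε * n

/-- The nonincreasing degree sequence of a finite graph. -/
noncomputable def degList {V : Type*} [Fintype V] (G : SimpleGraph V) : List ℕ :=
  ((degMultiset G).sort (· ≤ ·)).reverse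

/-- `π` is degree-sufficient for `H`: termwise, `π` dominates the nonincreasing
degree sequence of `H`. -/
def DegreeSufficient {V : Type*} [Fintype V] (H : SimpleGraph V) (π : List ℕ) : Prop :=
  Fintype.card V ≤ π.length ∧ ∀ i < Fintype.card V, (degList H).getD i 0 ≤ π.getD i 0

/-- `H` is weakly σ-stable. -/
def WeaklySigmaStable {V : Type*} [Fintype V] (H : SimpleGraph V) : Prop :=
  ∀ ε : ℝ, 0 < ε → ∃ δ : ℝ, 0 < δ ∧ ∃ n₀ : ℕ, ∀ n : ℕ, n₀ ≤ n →
    ∀ π : List ℕ, π.length = n → π.Pairwise (· ≥ ·) → IsGraphic π →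
      DegreeSufficient H π →
      ¬ PotentiallyGraphic H π →
      (potentialNumber H n : ℝ) - δ * n ≤ (π.sum : ℝ) →
      ∃ π' ∈ potSet H n, (seqDist π π' : ℝ) < ε * n

/-- The join `G ∨ H` of two graphs on disjoint vertex sets. -/
def graphJoin {V : Type*} {W : Type*} (G : SimpleGraph V) (H : SimpleGraph W) :
    SimpleGraph (V ⊕ W) where
  Adj x y :=
    match x, y with
    | .inl a, .inl b => G.Adj a b
    | .inr a, .inr b => H.Adj a b
    | .inl _, .inr _ => True
    | .inr _, .inl _ => True
  symm := by
    refine ⟨?_⟩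
    rintro (a | a) (b | b) h
    · exact G.adj_symm h
    · trivial
    · trivial
    · exact H.adj_symm h
  loopless := by
    refine ⟨?_⟩
    rintro (a | a) h
    · exact G.loopless.irrefl a h
    · exact H.loopless.irrefl a h

/-- The double star `S_{x,y}`: two adjacent centers (vertices `0` and `1`), with the
first center adjacent to `x` leaves and the second to `y` leaves, so that the centers
have degrees `x+1` and `y+1`. -/
def doubleStar (x y : ℕ) : SimpleGraph (Fin (x + y + 2)) :=
  SimpleGraph.fromRel fun a b =>
    (a.val = 0 ∧ b.val = 1) ∨
    (a.val = 0 ∧ 2 ≤ b.val ∧ b.val < x + 2) ∨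
    (a.val = 1 ∧ x + 2 ≤ b.val)

/-- Laying off the term at (0-based) position `i`: delete it and subtract one from
the `d_i` largest remaining terms. -/
def layOffAt (π : List ℕ) (i : ℕ) : List ℕ :=
  let d := π.getD i 0
  let rest := π.take i ++ π.drop (i + 1)
  (rest.take d).map (· - 1) ++ rest.drop d

namespace CWS

set_option linter.unusedSectionVars false

open Finset

variable {V : Type*} [Fintype V] [DecidableEq V]

open scoped Classical in
/-- neighbor finset -/
noncomputable def nbr (G : SimpleGraph V) (v : V) : Finset V :=
  Finset.univ.filter (fun w => G.Adj v w)

noncomputable def dg (G : SimpleGraph V) (v : V) : ℕ := (nbr G v).card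

lemma mem_nbr {G : SimpleGraph V} {v w : V} : w ∈ nbr G v ↔ G.Adj v w := by
  classical
  simp [nbr]

lemma gdeg_eq_dg (G : SimpleGraph V) (v : V) : gdeg G v = dg G v := by
  have h : {w | G.Adj v w} = (nbr G v : Set V) := by
    ext w; simp [mem_nbr]
  rw [gdeg, h, Set.ncard_coe_finset]; rfl

lemma not_mem_nbr_self {G : SimpleGraph V} {v : V} : v ∉ nbr G v := by
  simp [mem_nbr]

/-- same pointwise degrees -/
def SameDeg (G G' : SimpleGraph V) : Prop := ∀ v, dg G v = dg G' v

lemma SameDeg.refl (G : SimpleGraph V) : SameDeg G G := fun _ => rfl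

lemma SameDeg.trans {G₁ G₂ G₃ : SimpleGraph V} (h : SameDeg G₁ G₂) (h' : SameDeg G₂ G₃) :
    SameDeg G₁ G₃ := fun v => (h v).trans (h' v)

lemma SameDeg.degMultiset_eq {G G' : SimpleGraph V} (h : SameDeg G G') :
    degMultiset G = degMultiset G' := by
  unfold degMultiset
  exact Multiset.map_congr rfl (fun v _ => by rw [gdeg_eq_dg, gdeg_eq_dg]; exact h v)

/-- clique of size k as a finset -/
def HasCliqueK (G : SimpleGraph V) (k : ℕ) : Prop :=
  ∃ T : Finset V, T.card = k ∧ ∀ u ∈ T, ∀ v ∈ T, u ≠ v → G.Adj u v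

lemma HasCliqueK.mono {G : SimpleGraph V} {k j : ℕ} (hjk : j ≤ k) (h : HasCliqueK G k) :
    HasCliqueK G j := by
  obtain ⟨T, hT, hadj⟩ := h
  obtain ⟨T', hT'sub, hT'⟩ := Finset.exists_subset_card_eq (s := T) (n := j) (by omega)
  exact ⟨T', hT', fun u hu v hv huv => hadj u (hT'sub hu) v (hT'sub hv) huv⟩

lemma HasCliqueK.containsSub {G : SimpleGraph V} {k : ℕ} (h : HasCliqueK G k) :
    ContainsSub (⊤ : SimpleGraph (Fin k)) G := by
  obtain ⟨T, hT, hadj⟩ := h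
  refine ⟨fun i => (T.equivFin.symm (Fin.cast hT.symm i) : V), ?_, ?_⟩
  · intro i j hij
    have h2 := T.equivFin.symm.injective (Subtype.ext hij)
    exact Fin.cast_injective _ h2
  · intro a b hab
    have hne : a ≠ b := hab.ne
    refine hadj _ (Subtype.mem _) _ (Subtype.mem _) ?_
    intro hc
    have h2 := T.equivFin.symm.injective (Subtype.ext hc)
    exact hne (Fin.cast_injective _ h2)

/-! ### The 2-switch -/

/-- `{x,y} = {a,b}` as unordered pair -/
def pr (x y a b : V) : Prop := (x = a ∧ y = b) ∨ (x = b ∧ y = a)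

lemma pr_symm {x y a b : V} : pr x y a b ↔ pr y x a b := by unfold pr; tauto

lemma pr_flip {x y a b : V} : pr x y a b ↔ pr x y b a := by unfold pr; tauto

lemma not_pr_left {x y a b : V} (h1 : x ≠ a) (h2 : x ≠ b) : ¬ pr x y a b := by
  rintro (⟨rfl, rfl⟩ | ⟨rfl, rfl⟩) <;> simp_all

lemma not_pr_right {x y a b : V} (h1 : y ≠ a) (h2 : y ≠ b) : ¬ pr x y a b := by
  rintro (⟨rfl, rfl⟩ | ⟨rfl, rfl⟩) <;> simp_all

/-- the 2-switch: remove edges pq, rs; add edges pr, qs -/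
def sw (G : SimpleGraph V) (p q r s : V) : SimpleGraph V where
  Adj x y := x ≠ y ∧
    ((G.Adj x y ∧ ¬ pr x y p q ∧ ¬ pr x y r s) ∨ pr x y p r ∨ pr x y q s)
  symm := by
    refine ⟨?_⟩
    rintro x y ⟨hne, h⟩
    refine ⟨hne.symm, ?_⟩
    rcases h with ⟨h1, h2, h3⟩ | h | h
    · exact Or.inl ⟨h1.symm, fun hc => h2 (pr_symm.mp hc), fun hc => h3 (pr_symm.mp hc)⟩
    · exact Or.inr (Or.inl (pr_symm.mp h))
    · exact Or.inr (Or.inr (pr_symm.mp h))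
  loopless := by refine ⟨?_⟩; rintro x ⟨hne, _⟩; exact hne rfl

lemma sw_adj {G : SimpleGraph V} {p q r s x y : V} :
    (sw G p q r s).Adj x y ↔ x ≠ y ∧
      ((G.Adj x y ∧ ¬ pr x y p q ∧ ¬ pr x y r s) ∨ pr x y p r ∨ pr x y q s) := Iff.rfl

lemma sw_comm1 (G : SimpleGraph V) (p q r s : V) : sw G p q r s = sw G q p s r := by
  ext x y
  simp only [sw_adj]
  constructor
  · rintro ⟨hne, ⟨h1, h2, h3⟩ | hh | hh⟩
    · exact ⟨hne, Or.inl ⟨h1, fun c => h2 (pr_flip.mp c), fun c => h3 (pr_flip.mp c)⟩⟩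
    · exact ⟨hne, Or.inr (Or.inr hh)⟩
    · exact ⟨hne, Or.inr (Or.inl hh)⟩
  · rintro ⟨hne, ⟨h1, h2, h3⟩ | hh | hh⟩
    · exact ⟨hne, Or.inl ⟨h1, fun c => h2 (pr_flip.mp c), fun c => h3 (pr_flip.mp c)⟩⟩
    · exact ⟨hne, Or.inr (Or.inr hh)⟩
    · exact ⟨hne, Or.inr (Or.inl hh)⟩

lemma sw_comm2 (G : SimpleGraph V) (p q r s : V) : sw G p q r s = sw G r s p q := by
  ext x y
  simp only [sw_adj]
  constructor
  · rintro ⟨hne, ⟨h1, h2, h3⟩ | hh | hh⟩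
    · exact ⟨hne, Or.inl ⟨h1, h3, h2⟩⟩
    · exact ⟨hne, Or.inr (Or.inl (pr_flip.mp hh))⟩
    · exact ⟨hne, Or.inr (Or.inr (pr_flip.mp hh))⟩
  · rintro ⟨hne, ⟨h1, h2, h3⟩ | hh | hh⟩
    · exact ⟨hne, Or.inl ⟨h1, h3, h2⟩⟩
    · exact ⟨hne, Or.inr (Or.inl (pr_flip.mp hh))⟩
    · exact ⟨hne, Or.inr (Or.inr (pr_flip.mp hh))⟩

/-- Hypotheses for a valid 2-switch. -/
structure SwOK (G : SimpleGraph V) (p q r s : V) : Prop where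
  adj_pq : G.Adj p q
  adj_rs : G.Adj r s
  nadj_pr : ¬ G.Adj p r
  nadj_qs : ¬ G.Adj q s
  ne_pr : p ≠ r
  ne_qs : q ≠ s

namespace SwOK

variable {G : SimpleGraph V} {p q r s : V}

variable (h : SwOK G p q r s)

include h

lemma ne_pq : p ≠ q := h.adj_pq.ne
lemma ne_rs : r ≠ s := h.adj_rs.ne
lemma ne_qr : q ≠ r := by rintro rfl; exact h.nadj_qs h.adj_rs
lemma ne_ps : p ≠ s := by rintro rfl; exact h.nadj_pr h.adj_rs.symm

lemma swok_comm1 : SwOK G q p s r :=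
  ⟨h.adj_pq.symm, h.adj_rs.symm, h.nadj_qs, h.nadj_pr, h.ne_qs, h.ne_pr⟩

lemma swok_comm2 : SwOK G r s p q :=
  ⟨h.adj_rs, h.adj_pq, fun hc => h.nadj_pr hc.symm, fun hc => h.nadj_qs hc.symm,
    h.ne_pr.symm, h.ne_qs.symm⟩

lemma adj_new_pr : (sw G p q r s).Adj p r :=
  ⟨h.ne_pr, Or.inr (Or.inl (Or.inl ⟨rfl, rfl⟩))⟩

lemma adj_new_qs : (sw G p q r s).Adj q s :=
  ⟨h.ne_qs, Or.inr (Or.inr (Or.inl ⟨rfl, rfl⟩))⟩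

/-- adjacency is preserved for pairs not among the four touched pairs -/
lemma adj_of_adj {x y : V} (hadj : G.Adj x y)
    (h1 : ¬ pr x y p q) (h2 : ¬ pr x y r s) : (sw G p q r s).Adj x y :=
  ⟨hadj.ne, Or.inl ⟨hadj, h1, h2⟩⟩

/-- new adjacency comes from old or from the two added pairs -/
lemma adj_cases {x y : V} (hadj : (sw G p q r s).Adj x y) :
    G.Adj x y ∨ pr x y p r ∨ pr x y q s := by
  rcases hadj with ⟨hne, ⟨h1, _, _⟩ | hh | hh⟩
  · exact Or.inl h1
  · exact Or.inr (Or.inl hh)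
  · exact Or.inr (Or.inr hh)

lemma nbr_sw_p : nbr (sw G p q r s) p = insert r ((nbr G p).erase q) := by
  have hpq := h.ne_pq; have hpr := h.ne_pr; have hps := h.ne_ps
  have hrs := h.ne_rs
  ext w
  simp only [mem_nbr, mem_insert, mem_erase, sw_adj]
  constructor
  · rintro ⟨hne, ⟨h1, h2, _⟩ | hh | hh⟩
    · refine Or.inr ⟨?_, h1⟩
      rintro rfl; exact h2 (Or.inl ⟨rfl, rfl⟩)
    · rcases hh with ⟨_, rfl⟩ | ⟨hc, _⟩
      · exact Or.inl rfl
      · exact absurd hc hpr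
    · rcases hh with ⟨hc, _⟩ | ⟨hc, _⟩
      · exact absurd hc hpq
      · exact absurd hc hps
  · rintro (rfl | ⟨hwq, hadj⟩)
    · exact ⟨hpr, Or.inr (Or.inl (Or.inl ⟨rfl, rfl⟩))⟩
    · refine ⟨hadj.ne, Or.inl ⟨hadj, ?_, ?_⟩⟩
      · rintro (⟨_, rfl⟩ | ⟨hc, _⟩)
        · exact hwq rfl
        · exact hpq hc
      · rintro (⟨hc, _⟩ | ⟨hc, _⟩)
        · exact hpr hc
        · exact hps hc

lemma dg_sw_p : dg (sw G p q r s) p = dg G p := by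
  rw [dg, h.nbr_sw_p, card_insert_of_notMem, card_erase_of_mem]
  · have hq : q ∈ nbr G p := mem_nbr.mpr h.adj_pq
    have : 1 ≤ (nbr G p).card := card_pos.mpr ⟨q, hq⟩
    unfold dg
    omega
  · exact mem_nbr.mpr h.adj_pq
  · intro hc
    exact h.nadj_pr (mem_nbr.mp (mem_of_mem_erase hc))

lemma nbr_sw_other {v : V} (hvp : v ≠ p) (hvq : v ≠ q) (hvr : v ≠ r) (hvs : v ≠ s) :
    nbr (sw G p q r s) v = nbr G v := by
  ext w
  simp only [mem_nbr, sw_adj]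
  constructor
  · rintro ⟨hne, ⟨h1, _, _⟩ | hh | hh⟩
    · exact h1
    · exact absurd hh (not_pr_left hvp hvr)
    · exact absurd hh (not_pr_left hvq hvs)
  · intro hadj
    exact ⟨hadj.ne, Or.inl ⟨hadj, not_pr_left hvp hvq, not_pr_left hvr hvs⟩⟩

lemma sameDeg : SameDeg G (sw G p q r s) := by
  intro v
  by_cases hvp : v = p
  · subst hvp; exact (h.dg_sw_p).symm
  by_cases hvq : v = q
  · subst hvq
    have := h.swok_comm1.dg_sw_p
    rw [← sw_comm1] at this
    exact this.symm
  by_cases hvr : v = r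
  · subst hvr
    have := h.swok_comm2.dg_sw_p
    rw [← sw_comm2] at this
    exact this.symm
  by_cases hvs : v = s
  · subst hvs
    have := h.swok_comm2.swok_comm1.dg_sw_p
    rw [← sw_comm1, ← sw_comm2] at this
    exact this.symm
  · rw [dg, dg, h.nbr_sw_other hvp hvq hvr hvs]

end SwOK

end CWS
namespace CWS

open Finset

open scoped Classical

variable {V : Type*} [Fintype V] [DecidableEq V]

/-- Attach `x` to every vertex of the hub set `W` by degree-preserving switches,
preserving all adjacencies inside `X`. -/
lemma attach (θ : ℕ) :
    ∀ (m : ℕ) (G : SimpleGraph V) (W X : Finset V) (x : V),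
    (W.filter (fun w => ¬ G.Adj x w)).card = m →
    W ⊆ X → x ∈ X → x ∉ W →
    (∀ w ∈ W, θ + X.card + 3 ≤ dg G w) →
    (∀ v, v ∉ X → dg G v < θ) →
    X.card ≤ dg G x + 1 →
    ∃ G', SameDeg G G' ∧
      (∀ u ∈ X, ∀ v ∈ X, G.Adj u v → G'.Adj u v) ∧
      (∀ w ∈ W, G'.Adj x w) := by
  intro m
  induction m with
  | zero =>
    intro G W X x hcard _ _ _ _ _ _
    refine ⟨G, SameDeg.refl G, fun u _ v _ h => h, ?_⟩
    intro w hw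
    by_contra hc
    have : w ∈ W.filter (fun w => ¬ G.Adj x w) := mem_filter.mpr ⟨hw, hc⟩
    rw [Finset.card_eq_zero] at hcard
    simp [hcard] at this
  | succ m ih =>
    intro G W X x hcard hWX hxX hxW hhub hsmall hdegx
    -- pick w₀ ∈ W not adjacent to x
    have hne : (W.filter (fun w => ¬ G.Adj x w)).Nonempty := by
      rw [← Finset.card_pos, hcard]; omega
    obtain ⟨w₀, hw₀mem⟩ := hne
    have hw₀W : w₀ ∈ W := (mem_filter.mp hw₀mem).1
    have hnadj : ¬ G.Adj x w₀ := (mem_filter.mp hw₀mem).2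
    have hxw₀ : x ≠ w₀ := fun hc => hxW (hc ▸ hw₀W)
    have hw₀X : w₀ ∈ X := hWX hw₀W
    -- pick b ∈ N(x) \ X
    have hbex : ∃ b ∈ nbr G x, b ∉ X := by
      by_contra hc
      push_neg at hc
      have hsub : nbr G x ⊆ (X.erase x).erase w₀ := by
        intro b hb
        refine mem_erase.mpr ⟨?_, mem_erase.mpr ⟨?_, hc b hb⟩⟩
        · rintro rfl; exact hnadj (mem_nbr.mp hb)
        · rintro rfl; exact not_mem_nbr_self hb
      have h1 := card_le_card hsub
      have hw₀ex : w₀ ∈ X.erase x := mem_erase.mpr ⟨Ne.symm hxw₀, hw₀X⟩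
      rw [card_erase_of_mem hw₀ex, card_erase_of_mem hxX] at h1
      have h2 : 1 < X.card := Finset.one_lt_card.mpr ⟨x, hxX, w₀, hw₀X, hxw₀⟩
      have h3 : dg G x = (nbr G x).card := rfl
      omega
    obtain ⟨b, hbnbr, hbX⟩ := hbex
    have hadjxb : G.Adj x b := mem_nbr.mp hbnbr
    have hdgb : dg G b < θ := hsmall b hbX
    -- pick a ∈ N(w₀) avoiding X ∪ N(b) ∪ {b, x}
    have haex : ∃ a ∈ nbr G w₀, a ∉ X ∧ a ∉ nbr G b ∧ a ≠ b := by
      by_contra hc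
      push_neg at hc
      have hsub : nbr G w₀ ⊆ X ∪ nbr G b ∪ {b} := by
        intro a ha
        rcases Classical.em (a ∈ X) with h | h
        · exact mem_union.mpr (Or.inl (mem_union.mpr (Or.inl h)))
        · rcases Classical.em (a ∈ nbr G b) with h2 | h2
          · exact mem_union.mpr (Or.inl (mem_union.mpr (Or.inr h2)))
          · have := hc a ha h h2
            exact mem_union.mpr (Or.inr (by simp [this]))
      have h1 := card_le_card hsub
      have h2 : (X ∪ nbr G b ∪ {b}).card ≤ X.card + dg G b + 1 := by
        calc (X ∪ nbr G b ∪ {b}).card ≤ (X ∪ nbr G b).card + ({b} : Finset V).card :=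
              card_union_le _ _
        _ ≤ X.card + (nbr G b).card + 1 := by
              have := card_union_le X (nbr G b)
              simp only [card_singleton]
              omega
      have h3 := hhub w₀ hw₀W
      have e1 : dg G w₀ = (nbr G w₀).card := rfl
      have e2 : dg G b = (nbr G b).card := rfl
      omega
    obtain ⟨a, hanbr, haX, hanb, hab⟩ := haex
    have hadjw₀a : G.Adj w₀ a := mem_nbr.mp hanbr
    have hnadjba : ¬ G.Adj b a := fun hc => hanb (mem_nbr.mpr hc)
    -- the switch
    have hok : SwOK G x b w₀ a :=
      ⟨hadjxb, hadjw₀a, hnadj, hnadjba, hxw₀, fun hc => hab (hc.symm)⟩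
    set G₁ := sw G x b w₀ a with hG₁
    have hsame : SameDeg G G₁ := hok.sameDeg
    have hpres : ∀ u ∈ X, ∀ v ∈ X, G.Adj u v → G₁.Adj u v := by
      intro u hu v hv hadj
      refine hok.adj_of_adj hadj ?_ ?_
      · rintro (⟨rfl, rfl⟩ | ⟨rfl, rfl⟩)
        · exact hbX hv
        · exact hbX hu
      · rintro (⟨rfl, rfl⟩ | ⟨rfl, rfl⟩)
        · exact haX hv
        · exact haX hu
    have hnew : G₁.Adj x w₀ := hok.adj_new_pr
    -- the new non-neighbour count went down
    have hfilter : W.filter (fun w => ¬ G₁.Adj x w) =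
        (W.filter (fun w => ¬ G.Adj x w)).erase w₀ := by
      ext w
      simp only [mem_filter, mem_erase]
      constructor
      · rintro ⟨hwW, hwnadj⟩
        refine ⟨?_, hwW, fun hadj => hwnadj (hpres x hxX w (hWX hwW) hadj)⟩
        rintro rfl; exact hwnadj hnew
      · rintro ⟨hwne, hwW, hwnadj⟩
        refine ⟨hwW, fun hadj => ?_⟩
        rcases hok.adj_cases hadj with h1 | h1 | h1
        · exact hwnadj h1
        · rcases h1 with ⟨_, rfl⟩ | ⟨hc, _⟩
          · exact hwne rfl
          · exact hxw₀ hc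
        · rcases h1 with ⟨hc, _⟩ | ⟨hc, _⟩
          · exact hbX (hc ▸ hxX)
          · exact haX (hc ▸ hxX)
    have hcard1 : (W.filter (fun w => ¬ G₁.Adj x w)).card = m := by
      rw [hfilter, card_erase_of_mem hw₀mem, hcard]
      omega
    obtain ⟨G', hsame', hpres', hadj'⟩ := ih G₁ W X x hcard1 hWX hxX hxW
      (fun w hw => (hsame w) ▸ hhub w hw)
      (fun v hv => (hsame v) ▸ hsmall v hv)
      ((hsame x) ▸ hdegx)
    exact ⟨G', hsame.trans hsame', fun u hu v hv hadj => hpres' u hu v hv (hpres u hu v hv hadj),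
      hadj'⟩

end CWS
namespace CWS

open Finset

open scoped Classical

variable {V : Type*} [Fintype V] [DecidableEq V]

/-- pairwise adjacency on a finset -/
def PairAdj (G : SimpleGraph V) (S : Finset V) : Prop :=
  ∀ u ∈ S, ∀ v ∈ S, u ≠ v → G.Adj u v

lemma pairAdj_hasClique {G : SimpleGraph V} {S : Finset V} {k : ℕ}
    (h : PairAdj G S) (hk : k ≤ S.card) : HasCliqueK G k := by
  obtain ⟨T, hTS, hT⟩ := Finset.exists_subset_card_eq hk
  exact ⟨T, hT, fun u hu v hv huv => h u (hTS hu) v (hTS hv) huv⟩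

/-- Inner loop of the bipartite machine: link `a_new` to every element of `C`. -/
lemma machineInner (k : ℕ) (A B : Finset V) (hdisj : Disjoint A B)
    (C : Finset V) (hCA : C ⊆ A) (a_new : V) (haA : a_new ∈ A) (haC : a_new ∉ C) :
    ∀ (s : ℕ) (G : SimpleGraph V) (U : Finset V),
    U ⊆ B →
    (C.filter (fun c => ¬ G.Adj a_new c)).card = s →
    (∀ a ∈ A, ∀ b ∈ B \ U, G.Adj a b) →
    PairAdj G C →
    U.card + 2 * s + k ≤ B.card →
    ∃ G', SameDeg G G' ∧
      (HasCliqueK G' k ∨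
        ∃ U' : Finset V, U ⊆ U' ∧ U' ⊆ B ∧ U'.card ≤ U.card + 2 * s ∧
          (∀ a ∈ A, ∀ b ∈ B \ U', G'.Adj a b) ∧ PairAdj G' (insert a_new C)) := by
  intro s
  induction s with
  | zero =>
    intro G U hUB hfilt hcross hCpair _
    refine ⟨G, SameDeg.refl G, Or.inr ⟨U, subset_rfl, hUB, by omega, hcross, ?_⟩⟩
    intro u hu v hv huv
    rw [Finset.card_eq_zero] at hfilt
    rcases mem_insert.mp hu with rfl | huC
    · rcases mem_insert.mp hv with rfl | hvC
      · exact absurd rfl huv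
      · by_contra hc
        have : v ∈ C.filter (fun c => ¬ G.Adj u c) := mem_filter.mpr ⟨hvC, hc⟩
        simp [hfilt] at this
    · rcases mem_insert.mp hv with rfl | hvC
      · by_contra hc
        have : u ∈ C.filter (fun c => ¬ G.Adj v c) :=
          mem_filter.mpr ⟨huC, fun h => hc h.symm⟩
        simp [hfilt] at this
      · exact hCpair u huC v hvC huv
  | succ s ih =>
    intro G U hUB hfilt hcross hCpair hsize
    have hne : (C.filter (fun c => ¬ G.Adj a_new c)).Nonempty := by
      rw [← Finset.card_pos, hfilt]; omega
    obtain ⟨c₀, hc₀mem⟩ := hne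
    have hc₀C : c₀ ∈ C := (mem_filter.mp hc₀mem).1
    have hnadj : ¬ G.Adj a_new c₀ := (mem_filter.mp hc₀mem).2
    by_cases hcase : ∃ b ∈ B \ U, ∃ b' ∈ B \ U, b ≠ b' ∧ ¬ G.Adj b b'
    · obtain ⟨b, hb, b', hb', hbb', hnadjbb⟩ := hcase
      have hbB : b ∈ B := (mem_sdiff.mp hb).1
      have hb'B : b' ∈ B := (mem_sdiff.mp hb').1
      have hok : SwOK G c₀ b a_new b' :=
        ⟨hcross c₀ (hCA hc₀C) b hb, hcross a_new haA b' hb',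
         fun h => hnadj h.symm, hnadjbb,
         fun h => haC (h ▸ hc₀C), hbb'⟩
      set G₁ := sw G c₀ b a_new b' with hG₁
      set U₁ : Finset V := insert b (insert b' U) with hU₁
      have hU₁B : U₁ ⊆ B := by
        intro z hz
        rcases mem_insert.mp hz with rfl | hz
        · exact hbB
        rcases mem_insert.mp hz with rfl | hz
        · exact hb'B
        · exact hUB hz
      have hnotB : ∀ x ∈ A, x ∉ B := fun x hx => disjoint_left.mp hdisj hx
      -- preservation for pairs avoiding B
      have hpresAA : ∀ x y, x ∉ B → y ∉ B → G.Adj x y → G₁.Adj x y := by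
        intro x y hx hy hadj
        refine hok.adj_of_adj hadj ?_ ?_
        · rintro (⟨rfl, rfl⟩ | ⟨rfl, rfl⟩)
          · exact hy hbB
          · exact hx hbB
        · rintro (⟨rfl, rfl⟩ | ⟨rfl, rfl⟩)
          · exact hy hb'B
          · exact hx hb'B
      have hpresXB : ∀ a ∈ A, ∀ z ∈ B \ U₁, G.Adj a z → G₁.Adj a z := by
        intro a ha z hz hadj
        have hzU₁ : z ∉ U₁ := (mem_sdiff.mp hz).2
        refine hok.adj_of_adj hadj ?_ ?_
        · rintro (⟨rfl, rfl⟩ | ⟨rfl, rfl⟩)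
          · exact hzU₁ (mem_insert_self _ _)
          · exact hnotB a ha hbB
        · rintro (⟨rfl, rfl⟩ | ⟨rfl, rfl⟩)
          · exact hzU₁ (mem_insert.mpr (Or.inr (mem_insert_self _ _)))
          · exact hnotB a ha hb'B
      have hcross₁ : ∀ a ∈ A, ∀ z ∈ B \ U₁, G₁.Adj a z := by
        intro a ha z hz
        have hzU : z ∈ B \ U := by
          rcases mem_sdiff.mp hz with ⟨hzB, hzU₁⟩
          exact mem_sdiff.mpr ⟨hzB, fun hc => hzU₁ (mem_insert.mpr (Or.inr (mem_insert.mpr (Or.inr hc))))⟩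
        exact hpresXB a ha z hz (hcross a ha z hzU)
      have hCpair₁ : PairAdj G₁ C := fun u hu v hv huv =>
        hpresAA u v (hnotB u (hCA hu)) (hnotB v (hCA hv)) (hCpair u hu v hv huv)
      have hnew : G₁.Adj a_new c₀ := hok.adj_new_pr.symm
      have hfilter1 : C.filter (fun c => ¬ G₁.Adj a_new c) =
          (C.filter (fun c => ¬ G.Adj a_new c)).erase c₀ := by
        ext c
        simp only [mem_filter, mem_erase]
        constructor
        · rintro ⟨hcC, hcnadj⟩
          refine ⟨?_, hcC, fun hadj => hcnadj
            (hpresAA a_new c (hnotB a_new haA) (hnotB c (hCA hcC)) hadj)⟩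
          rintro rfl; exact hcnadj hnew
        · rintro ⟨hcne, hcC, hcnadj⟩
          refine ⟨hcC, fun hadj => ?_⟩
          rcases hok.adj_cases hadj with h1 | h1 | h1
          · exact hcnadj h1
          · rcases h1 with ⟨hc1, _⟩ | ⟨_, rfl⟩
            · exact haC (hc1 ▸ hc₀C)
            · exact hcne rfl
          · rcases h1 with ⟨hc1, _⟩ | ⟨hc1, _⟩
            · exact hnotB a_new haA (hc1 ▸ hbB)
            · exact hnotB a_new haA (hc1 ▸ hb'B)
      have hcard1 : (C.filter (fun c => ¬ G₁.Adj a_new c)).card = s := by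
        rw [hfilter1, card_erase_of_mem hc₀mem, hfilt]; omega
      have hU₁card : U₁.card ≤ U.card + 2 := by
        calc U₁.card ≤ (insert b' U).card + 1 := card_insert_le _ _
        _ ≤ U.card + 2 := by have := card_insert_le b' U; omega
      obtain ⟨G', hsame', hres⟩ := ih G₁ U₁ hU₁B hcard1 hcross₁ hCpair₁ (by omega)
      refine ⟨G', (hok.sameDeg).trans hsame', ?_⟩
      rcases hres with hclique | ⟨U', hUU', hU'B, hU'card, hcross', hpair'⟩
      · exact Or.inl hclique
      · refine Or.inr ⟨U', ?_, hU'B, by omega, hcross', hpair'⟩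
        intro z hz
        exact hUU' (mem_insert.mpr (Or.inr (mem_insert.mpr (Or.inr hz))))
    · -- B \ U is a clique: done
      push_neg at hcase
      refine ⟨G, SameDeg.refl G, Or.inl ?_⟩
      refine pairAdj_hasClique (S := B \ U) (fun u hu v hv huv => hcase u hu v hv huv) ?_
      have := card_le_card (sdiff_subset (s := B) (t := U))
      have h2 : U.card ≤ B.card := card_le_card hUB
      have h3 := card_sdiff_of_subset hUB
      omega

/-- Outer loop of the bipartite machine. -/
lemma machineAux (k : ℕ) (hk : 3 ≤ k) (A B : Finset V) (hdisj : Disjoint A B)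
    (hA : 3 * k * k ≤ A.card) (hB : 3 * k * k ≤ B.card) :
    ∀ (t : ℕ) (G : SimpleGraph V) (C U : Finset V),
    C ⊆ A → U ⊆ B → PairAdj G C →
    (∀ a ∈ A, ∀ b ∈ B \ U, G.Adj a b) →
    C.card + t = k - 1 → U.card ≤ 2 * k * C.card →
    ∃ G', SameDeg G G' ∧ HasCliqueK G' k := by
  intro t
  induction t with
  | zero =>
    intro G C U hCA hUB hCpair hcross hcards hUcard
    have hBU : (B \ U).Nonempty := by
      have hCk : C.card + 1 ≤ k := by omega
      have e1 : 2 * k * (C.card + 1) ≤ 2 * k * k := Nat.mul_le_mul_left (2 * k) hCk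
      have hkk : 3 * k ≤ k * k := Nat.mul_le_mul_right k hk
      have hUB2 : U.card < B.card := by linarith [hUcard, hB, hk]
      rw [← card_pos, card_sdiff_of_subset hUB]
      omega
    obtain ⟨b₀, hb₀⟩ := hBU
    have hb₀B : b₀ ∈ B := (mem_sdiff.mp hb₀).1
    have hb₀C : b₀ ∉ C := fun hc => disjoint_left.mp hdisj (hCA hc) hb₀B
    refine ⟨G, SameDeg.refl G, insert b₀ C, ?_, ?_⟩
    · rw [card_insert_of_notMem hb₀C]; omega
    · intro u hu v hv huv
      rcases mem_insert.mp hu with rfl | huC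
      · rcases mem_insert.mp hv with rfl | hvC
        · exact absurd rfl huv
        · exact (hcross v (hCA hvC) u hb₀).symm
      · rcases mem_insert.mp hv with rfl | hvC
        · exact hcross u (hCA huC) v hb₀
        · exact hCpair u huC v hvC huv
  | succ t ih =>
    intro G C U hCA hUB hCpair hcross hcards hUcard
    have hCk : C.card + 2 ≤ k := by omega
    have hkk : 3 * k ≤ k * k := Nat.mul_le_mul_right k hk
    have hAC : (A \ C).Nonempty := by
      have hCA2 : C.card < A.card := by linarith [hA, hk]
      rw [← card_pos, card_sdiff_of_subset hCA]
      omega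
    obtain ⟨a_new, hanew⟩ := hAC
    have haA : a_new ∈ A := (mem_sdiff.mp hanew).1
    have haC : a_new ∉ C := (mem_sdiff.mp hanew).2
    set s := (C.filter (fun c => ¬ G.Adj a_new c)).card with hs
    have hsC : s ≤ C.card := card_le_card (filter_subset _ _)
    have e4 : (2 * k + 2) * (C.card + 2) ≤ (2 * k + 2) * k := Nat.mul_le_mul_left _ hCk
    have hsize : U.card + 2 * s + k ≤ B.card := by linarith [hUcard, hsC, hB, e4, hkk, hk]
    obtain ⟨G₁, hsame₁, hres⟩ := machineInner k A B hdisj C hCA a_new haA haC s G U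
      hUB rfl hcross hCpair hsize
    rcases hres with hclique | ⟨U', _, hU'B, hU'card, hcross', hpair'⟩
    · exact ⟨G₁, hsame₁, hclique⟩
    · have hC₁A : insert a_new C ⊆ A := insert_subset haA hCA
      have hcards₁ : (insert a_new C).card + t = k - 1 := by
        rw [card_insert_of_notMem haC]; omega
      have hU'card₁ : U'.card ≤ 2 * k * (insert a_new C).card := by
        rw [card_insert_of_notMem haC]
        linarith [hU'card, hUcard, hsC, hCk]
      obtain ⟨G', hsame', hclique⟩ := ih G₁ (insert a_new C) U' hC₁A hU'B hpair'
        hcross' hcards₁ hU'card₁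
      exact ⟨G', hsame₁.trans hsame', hclique⟩

/-- The bipartite machine: a large complete bipartite pair yields a `k`-clique
after degree-preserving switches. -/
lemma machine (k : ℕ) (hk : 3 ≤ k) (G : SimpleGraph V) (A B : Finset V)
    (hdisj : Disjoint A B) (hbip : ∀ a ∈ A, ∀ b ∈ B, G.Adj a b)
    (hA : 3 * k * k ≤ A.card) (hB : 3 * k * k ≤ B.card) :
    ∃ G', SameDeg G G' ∧ HasCliqueK G' k := by
  refine machineAux k hk A B hdisj hA hB (k - 1) G ∅ ∅ (empty_subset _) (empty_subset _)
    (fun u hu => absurd hu (notMem_empty u)) ?_ (by simp) (by simp)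
  intro a ha b hb
  exact hbip a ha b (mem_sdiff.mp hb).1

/-- Making a set of high-degree vertices into a clique by switches
(or finding a `k`-clique outright). -/
lemma cliqueBigs (k : ℕ) (hk : 3 ≤ k) :
    ∀ (t : ℕ) (G : SimpleGraph V) (B X : Finset V),
    ((B ×ˢ B).filter (fun p => p.1 ≠ p.2 ∧ ¬ G.Adj p.1 p.2)).card = t →
    B ⊆ X → X.card ≤ k → (∀ v ∈ B, 7 * k * k ≤ dg G v) →
    ∃ G', SameDeg G G' ∧
      (HasCliqueK G' k ∨
        ((∀ u ∈ X, ∀ v ∈ X, G.Adj u v → G'.Adj u v) ∧ PairAdj G' B)) := by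
  intro t
  induction t using Nat.strong_induction_on with
  | _ t iht =>
    intro G B X hmeas hBX hXk hbig
    by_cases hdone : ∀ u ∈ B, ∀ v ∈ B, u ≠ v → G.Adj u v
    · exact ⟨G, SameDeg.refl G, Or.inr ⟨fun u _ v _ h => h, hdone⟩⟩
    push_neg at hdone
    obtain ⟨u, huB, v, hvB, huv, hnadj⟩ := hdone
    set A' := nbr G u \ X with hA'
    set B' := nbr G v \ X with hB'
    have hA'card : 7 * k * k ≤ A'.card + k := by
      have h1 : nbr G u ⊆ A' ∪ X := by
        intro z hz
        rcases Classical.em (z ∈ X) with h | h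
        · exact mem_union.mpr (Or.inr h)
        · exact mem_union.mpr (Or.inl (mem_sdiff.mpr ⟨hz, h⟩))
      have h2 := card_le_card h1
      have h3 := card_union_le A' X
      have h4 := hbig u huB
      have e1 : dg G u = (nbr G u).card := rfl
      linarith [hXk]
    have hB'card : 7 * k * k ≤ B'.card + k := by
      have h1 : nbr G v ⊆ B' ∪ X := by
        intro z hz
        rcases Classical.em (z ∈ X) with h | h
        · exact mem_union.mpr (Or.inr h)
        · exact mem_union.mpr (Or.inl (mem_sdiff.mpr ⟨hz, h⟩))
      have h2 := card_le_card h1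
      have h3 := card_union_le B' X
      have h4 := hbig v hvB
      have e1 : dg G v = (nbr G v).card := rfl
      linarith [hXk]
    by_cases hcase : ∃ a ∈ A', ∃ b ∈ B', a ≠ b ∧ ¬ G.Adj a b
    · -- switch to add the edge uv
      obtain ⟨a, ha, b, hb, hab, hnadjab⟩ := hcase
      have haX : a ∉ X := (mem_sdiff.mp ha).2
      have hbX : b ∉ X := (mem_sdiff.mp hb).2
      have hok : SwOK G u a v b :=
        ⟨mem_nbr.mp (mem_sdiff.mp ha).1, (mem_nbr.mp (mem_sdiff.mp hb).1),
         hnadj, hnadjab, huv, hab⟩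
      set G₁ := sw G u a v b with hG₁
      have hpresX : ∀ x ∈ X, ∀ y ∈ X, G.Adj x y → G₁.Adj x y := by
        intro x hx y hy hadj
        refine hok.adj_of_adj hadj ?_ ?_
        · rintro (⟨rfl, rfl⟩ | ⟨rfl, rfl⟩)
          · exact haX hy
          · exact haX hx
        · rintro (⟨rfl, rfl⟩ | ⟨rfl, rfl⟩)
          · exact hbX hy
          · exact hbX hx
      have hnew : G₁.Adj u v := hok.adj_new_pr
      -- measure decreases
      have hsub : ((B ×ˢ B).filter (fun p => p.1 ≠ p.2 ∧ ¬ G₁.Adj p.1 p.2)) ⊂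
          ((B ×ˢ B).filter (fun p => p.1 ≠ p.2 ∧ ¬ G.Adj p.1 p.2)) := by
        constructor
        · intro p hp
          rcases mem_filter.mp hp with ⟨hpmem, hpne, hpnadj⟩
          refine mem_filter.mpr ⟨hpmem, hpne, fun hadj => hpnadj ?_⟩
          rcases mem_product.mp hpmem with ⟨h1, h2⟩
          exact hpresX p.1 (hBX h1) p.2 (hBX h2) hadj
        · intro hsub2
          have hm : (u, v) ∈ (B ×ˢ B).filter (fun p => p.1 ≠ p.2 ∧ ¬ G.Adj p.1 p.2) :=
            mem_filter.mpr ⟨mem_product.mpr ⟨huB, hvB⟩, huv, hnadj⟩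
          have := hsub2 hm
          rcases mem_filter.mp this with ⟨_, _, hc⟩
          exact hc hnew
      have hmeas1 := card_lt_card hsub
      rw [hmeas] at hmeas1
      obtain ⟨G', hsame', hres⟩ := iht _ hmeas1 G₁ B X rfl hBX hXk
        (fun w hw => (hok.sameDeg w) ▸ hbig w hw)
      refine ⟨G', (hok.sameDeg).trans hsame', ?_⟩
      rcases hres with hclique | ⟨hpres', hpair'⟩
      · exact Or.inl hclique
      · exact Or.inr ⟨fun x hx y hy hadj => hpres' x hx y hy (hpresX x hx y hy hadj), hpair'⟩
    · -- deadlock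
      push_neg at hcase
      have hdead : ∀ a ∈ A', ∀ b ∈ B', a = b ∨ G.Adj a b := by
        intro a ha b hb
        rcases Classical.em (a = b) with h | h
        · exact Or.inl h
        · exact Or.inr (hcase a ha b hb h)
      set D := A' ∩ B' with hD
      by_cases hDcard : k ≤ D.card
      · refine ⟨G, SameDeg.refl G, Or.inl (pairAdj_hasClique ?_ hDcard)⟩
        intro x hx y hy hxy
        rcases hdead x (mem_of_mem_inter_left hx) y (mem_of_mem_inter_right hy) with h | h
        · exact absurd h hxy
        · exact h
      · push_neg at hDcard
        set A₁ := A' \ B' with hA₁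
        set B₁ := B' \ A' with hB₁
        have hdisj : Disjoint A₁ B₁ := disjoint_sdiff_sdiff
        have hbip : ∀ a ∈ A₁, ∀ b ∈ B₁, G.Adj a b := by
          intro a ha b hb
          rcases hdead a (mem_sdiff.mp ha).1 b (mem_sdiff.mp hb).1 with h | h
          · exact absurd ((mem_sdiff.mp ha).2) (h ▸ fun hc => hc (mem_sdiff.mp hb).1)
          · exact h
        have hA₁card : 3 * k * k ≤ A₁.card := by
          have h1 : A' ⊆ A₁ ∪ D := by
            intro z hz
            rcases Classical.em (z ∈ B') with h | h
            · exact mem_union.mpr (Or.inr (mem_inter.mpr ⟨hz, h⟩))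
            · exact mem_union.mpr (Or.inl (mem_sdiff.mpr ⟨hz, h⟩))
          have h2 := card_le_card h1
          have h3 := card_union_le A₁ D
          have hkk : 3 * k ≤ k * k := Nat.mul_le_mul_right k hk
          linarith [hA'card, hDcard, hk]
        have hB₁card : 3 * k * k ≤ B₁.card := by
          have h1 : B' ⊆ B₁ ∪ D := by
            intro z hz
            rcases Classical.em (z ∈ A') with h | h
            · exact mem_union.mpr (Or.inr (mem_inter.mpr ⟨h, hz⟩))
            · exact mem_union.mpr (Or.inl (mem_sdiff.mpr ⟨hz, h⟩))
          have h2 := card_le_card h1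
          have h3 := card_union_le B₁ D
          have hkk : 3 * k ≤ k * k := Nat.mul_le_mul_right k hk
          linarith [hB'card, hDcard, hk]
        obtain ⟨G', hsame', hclique⟩ := machine k hk G A₁ B₁ hdisj hbip hA₁card hB₁card
        exact ⟨G', hsame', Or.inl hclique⟩

end CWS
namespace CWS

open Finset

open scoped Classical

variable {V : Type*} [Fintype V] [DecidableEq V]

/-- Produce (after switches) an edge between two vertices of degree ≥ k-1 outside `W`. -/
lemma goodEdge (k : ℕ) (hk : 3 ≤ k) (G : SimpleGraph V) (W : Finset V) (u₁ u₂ : V)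
    (hu₁W : u₁ ∉ W) (hu₂W : u₂ ∉ W) (hne : u₁ ≠ u₂)
    (hd₁ : k ≤ dg G u₁ + 1) (hd₂ : k ≤ dg G u₂ + 1)
    (hXk : (W ∪ {u₁, u₂}).card ≤ k) :
    ∃ G' x y, SameDeg G G' ∧ G'.Adj x y ∧ x ∉ W ∧ y ∉ W ∧
      k ≤ dg G x + 1 ∧ k ≤ dg G y + 1 := by
  set X : Finset V := W ∪ {u₁, u₂} with hX
  have hu₁X : u₁ ∈ X := mem_union.mpr (Or.inr (by simp))
  have hu₂X : u₂ ∈ X := mem_union.mpr (Or.inr (by simp))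
  by_cases hadj12 : G.Adj u₁ u₂
  · exact ⟨G, u₁, u₂, SameDeg.refl G, hadj12, hu₁W, hu₂W, hd₁, hd₂⟩
  set A : Finset V := nbr G u₁ \ X with hA
  set B : Finset V := nbr G u₂ \ X with hB
  -- A and B are nonempty
  have hXA : ∀ z ∈ nbr G u₁, z ∉ A → z ∈ W ∩ nbr G u₁ := by
    intro z hz hzA
    have hzX : z ∈ X := by
      by_contra hc
      exact hzA (mem_sdiff.mpr ⟨hz, hc⟩)
    rcases mem_union.mp hzX with h | h
    · exact mem_inter.mpr ⟨h, hz⟩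
    · exfalso
      rcases mem_insert.mp h with rfl | h2
      · exact not_mem_nbr_self hz
      · rw [mem_singleton] at h2
        subst h2
        exact hadj12 (mem_nbr.mp hz)
  have hXB : ∀ z ∈ nbr G u₂, z ∉ B → z ∈ W ∩ nbr G u₂ := by
    intro z hz hzB
    have hzX : z ∈ X := by
      by_contra hc
      exact hzB (mem_sdiff.mpr ⟨hz, hc⟩)
    rcases mem_union.mp hzX with h | h
    · exact mem_inter.mpr ⟨h, hz⟩
    · exfalso
      rcases mem_insert.mp h with rfl | h2
      · exact hadj12 (mem_nbr.mp hz).symm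
      · rw [mem_singleton] at h2
        subst h2
        exact not_mem_nbr_self hz
  have hsplit1 : dg G u₁ ≤ (W ∩ nbr G u₁).card + A.card := by
    have hsub : nbr G u₁ ⊆ (W ∩ nbr G u₁) ∪ A := by
      intro z hz
      rcases Classical.em (z ∈ A) with h | h
      · exact mem_union.mpr (Or.inr h)
      · exact mem_union.mpr (Or.inl (hXA z hz h))
    calc dg G u₁ = (nbr G u₁).card := rfl
    _ ≤ ((W ∩ nbr G u₁) ∪ A).card := card_le_card hsub
    _ ≤ _ := card_union_le _ _
  have hsplit2 : dg G u₂ ≤ (W ∩ nbr G u₂).card + B.card := by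
    have hsub : nbr G u₂ ⊆ (W ∩ nbr G u₂) ∪ B := by
      intro z hz
      rcases Classical.em (z ∈ B) with h | h
      · exact mem_union.mpr (Or.inr h)
      · exact mem_union.mpr (Or.inl (hXB z hz h))
    calc dg G u₂ = (nbr G u₂).card := rfl
    _ ≤ ((W ∩ nbr G u₂) ∪ B).card := card_le_card hsub
    _ ≤ _ := card_union_le _ _
  have hWcard : W.card + 2 ≤ k := by
    have hdisjW : Disjoint W ({u₁, u₂} : Finset V) := by
      rw [disjoint_right]
      intro z hz
      rcases mem_insert.mp hz with rfl | hz2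
      · exact hu₁W
      · rw [mem_singleton] at hz2; subst hz2; exact hu₂W
    have hXc : X.card = W.card + 2 := by
      rw [hX, card_union_of_disjoint hdisjW, card_insert_of_notMem
        (fun h => hne (mem_singleton.mp h)), card_singleton]
    omega
  have hAne : A.Nonempty := by
    rw [← card_pos]
    by_contra hc
    push_neg at hc
    have hA0 : A.card = 0 := by omega
    have h2 : (W ∩ nbr G u₁).card ≤ W.card := card_le_card inter_subset_left
    omega
  have hBne : B.Nonempty := by
    rw [← card_pos]
    by_contra hc
    push_neg at hc
    have hB0 : B.card = 0 := by omega
    have h2 : (W ∩ nbr G u₂).card ≤ W.card := card_le_card inter_subset_left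
    omega
  by_cases hcase : ∃ a ∈ A, ∃ b ∈ B, a ≠ b ∧ ¬ G.Adj a b
  · -- the main switch
    obtain ⟨a, ha, b, hb, hab, hnadjab⟩ := hcase
    have hok : SwOK G u₁ a u₂ b :=
      ⟨mem_nbr.mp (mem_sdiff.mp ha).1, mem_nbr.mp (mem_sdiff.mp hb).1,
       hadj12, hnadjab, hne, hab⟩
    exact ⟨sw G u₁ a u₂ b, u₁, u₂, hok.sameDeg, hok.adj_new_pr, hu₁W, hu₂W, hd₁, hd₂⟩
  push_neg at hcase
  have hdead : ∀ a ∈ A, ∀ b ∈ B, a = b ∨ G.Adj a b := by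
    intro a ha b hb
    rcases Classical.em (a = b) with h | h
    · exact Or.inl h
    · exact Or.inr (hcase a ha b hb h)
  by_cases hbigA : ∃ a ∈ A, k ≤ dg G a + 1
  · obtain ⟨a, ha, hdga⟩ := hbigA
    have haX : a ∉ X := (mem_sdiff.mp ha).2
    have haW : a ∉ W := fun hc => haX (mem_union.mpr (Or.inl hc))
    exact ⟨G, u₁, a, SameDeg.refl G, mem_nbr.mp (mem_sdiff.mp ha).1, hu₁W, haW, hd₁, hdga⟩
  by_cases hbigB : ∃ b ∈ B, k ≤ dg G b + 1
  · obtain ⟨b, hb, hdgb⟩ := hbigB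
    have hbX : b ∉ X := (mem_sdiff.mp hb).2
    have hbW : b ∉ W := fun hc => hbX (mem_union.mpr (Or.inl hc))
    exact ⟨G, u₂, b, SameDeg.refl G, mem_nbr.mp (mem_sdiff.mp hb).1, hu₂W, hbW, hd₂, hdgb⟩
  push_neg at hbigA hbigB
  -- all A, B vertices have degree ≤ k - 2 : derive |A|,|B| ≤ k - 3
  have hAX : ∀ a ∈ A, a ∉ X := fun a ha => (mem_sdiff.mp ha).2
  have hBX : ∀ b ∈ B, b ∉ X := fun b hb => (mem_sdiff.mp hb).2
  have hcardA : ∀ b ∈ B, A.card + 1 ≤ dg G b := by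
    intro b hb
    have hsub0 : A.erase b ⊆ nbr G b := by
      intro z hz
      have hzA : z ∈ A := mem_of_mem_erase hz
      have hzb : z ≠ b := ne_of_mem_erase hz
      rcases hdead z hzA b hb with h | h
      · exact absurd h hzb
      · exact mem_nbr.mpr h.symm
    have hu₂mem : u₂ ∈ nbr G b := mem_nbr.mpr (mem_nbr.mp (mem_sdiff.mp hb).1).symm
    have h2 : u₂ ∉ A.erase b := fun hc => hAX u₂ (mem_of_mem_erase hc) hu₂X
    have e1 : dg G b = (nbr G b).card := rfl
    rcases Classical.em (b ∈ A) with hbA | hbA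
    · have hu₁mem : u₁ ∈ nbr G b := mem_nbr.mpr (mem_nbr.mp (mem_sdiff.mp hbA).1).symm
      have h2' : u₁ ∉ insert u₂ (A.erase b) := by
        intro hc
        rcases mem_insert.mp hc with h | h
        · exact hne h
        · exact hAX u₁ (mem_of_mem_erase h) hu₁X
      have hsub : insert u₁ (insert u₂ (A.erase b)) ⊆ nbr G b := by
        intro z hz
        rcases mem_insert.mp hz with rfl | hz2
        · exact hu₁mem
        rcases mem_insert.mp hz2 with rfl | hz3
        · exact hu₂mem
        · exact hsub0 hz3
      have h1 := card_le_card hsub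
      rw [card_insert_of_notMem h2', card_insert_of_notMem h2,
        card_erase_of_mem hbA] at h1
      have hApos : 1 ≤ A.card := card_pos.mpr ⟨b, hbA⟩
      omega
    · have hsub : insert u₂ (A.erase b) ⊆ nbr G b := by
        intro z hz
        rcases mem_insert.mp hz with rfl | hz2
        · exact hu₂mem
        · exact hsub0 hz2
      have h1 := card_le_card hsub
      rw [card_insert_of_notMem h2, erase_eq_of_notMem hbA] at h1
      omega
  have hcardB : ∀ a ∈ A, B.card + 1 ≤ dg G a := by
    intro a ha
    have hsub0 : B.erase a ⊆ nbr G a := by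
      intro z hz
      have hzB : z ∈ B := mem_of_mem_erase hz
      have hza : z ≠ a := ne_of_mem_erase hz
      rcases hdead a ha z hzB with h | h
      · exact absurd h.symm hza
      · exact mem_nbr.mpr h
    have hu₁mem : u₁ ∈ nbr G a := mem_nbr.mpr (mem_nbr.mp (mem_sdiff.mp ha).1).symm
    have h2 : u₁ ∉ B.erase a := fun hc => hBX u₁ (mem_of_mem_erase hc) hu₁X
    have e1 : dg G a = (nbr G a).card := rfl
    rcases Classical.em (a ∈ B) with haB | haB
    · have hu₂mem : u₂ ∈ nbr G a := mem_nbr.mpr (mem_nbr.mp (mem_sdiff.mp haB).1).symm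
      have h2' : u₂ ∉ insert u₁ (B.erase a) := by
        intro hc
        rcases mem_insert.mp hc with h | h
        · exact hne h.symm
        · exact hBX u₂ (mem_of_mem_erase h) hu₂X
      have hsub : insert u₂ (insert u₁ (B.erase a)) ⊆ nbr G a := by
        intro z hz
        rcases mem_insert.mp hz with rfl | hz2
        · exact hu₂mem
        rcases mem_insert.mp hz2 with rfl | hz3
        · exact hu₁mem
        · exact hsub0 hz3
      have h1 := card_le_card hsub
      rw [card_insert_of_notMem h2', card_insert_of_notMem h2,
        card_erase_of_mem haB] at h1
      have hBpos : 1 ≤ B.card := card_pos.mpr ⟨a, haB⟩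
      omega
    · have hsub : insert u₁ (B.erase a) ⊆ nbr G a := by
        intro z hz
        rcases mem_insert.mp hz with rfl | hz2
        · exact hu₁mem
        · exact hsub0 hz2
      have h1 := card_le_card hsub
      rw [card_insert_of_notMem h2, erase_eq_of_notMem haB] at h1
      omega
  obtain ⟨b₀, hb₀⟩ := hBne
  obtain ⟨a₀, ha₀⟩ := hAne
  have hAk : A.card + 3 ≤ k := by
    have h1 := hcardA b₀ hb₀
    have h2 := hbigB b₀ hb₀
    omega
  have hBk : B.card + 3 ≤ k := by
    have h1 := hcardB a₀ ha₀
    have h2 := hbigA a₀ ha₀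
    omega
  -- hence u₁, u₂ have W-neighbours
  by_cases hc1 : ∃ w ∈ W ∩ nbr G u₁, ∃ b ∈ B, ¬ G.Adj w b
  · obtain ⟨w₁, hw₁, b, hb, hnadjwb⟩ := hc1
    have hok : SwOK G u₁ w₁ u₂ b :=
      ⟨mem_nbr.mp (mem_inter.mp hw₁).2, mem_nbr.mp (mem_sdiff.mp hb).1,
       hadj12, hnadjwb, hne, fun hc => hBX b hb (hc ▸ mem_union.mpr (Or.inl (mem_inter.mp hw₁).1))⟩
    exact ⟨sw G u₁ w₁ u₂ b, u₁, u₂, hok.sameDeg, hok.adj_new_pr, hu₁W, hu₂W, hd₁, hd₂⟩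
  by_cases hc2 : ∃ w ∈ W ∩ nbr G u₂, ∃ a ∈ A, ¬ G.Adj w a
  · obtain ⟨w₂, hw₂, a, ha, hnadjwa⟩ := hc2
    have hok : SwOK G u₂ w₂ u₁ a :=
      ⟨mem_nbr.mp (mem_inter.mp hw₂).2, mem_nbr.mp (mem_sdiff.mp ha).1,
       fun h => hadj12 h.symm, hnadjwa, hne.symm,
       fun hc => hAX a ha (hc ▸ mem_union.mpr (Or.inl (mem_inter.mp hw₂).1))⟩
    exact ⟨sw G u₂ w₂ u₁ a, u₂, u₁, hok.sameDeg, hok.adj_new_pr, hu₂W, hu₁W, hd₂, hd₁⟩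
  -- impossible: b₀ would have degree ≥ k - 1 + 1
  exfalso
  push_neg at hc1
  have hsub : insert u₂ ((A.erase b₀) ∪ (W ∩ nbr G u₁)) ⊆ nbr G b₀ := by
    intro z hz
    rcases mem_insert.mp hz with rfl | hz2
    · exact mem_nbr.mpr (mem_nbr.mp (mem_sdiff.mp hb₀).1).symm
    rcases mem_union.mp hz2 with h | h
    · have hzA : z ∈ A := mem_of_mem_erase h
      have hzb : z ≠ b₀ := ne_of_mem_erase h
      rcases hdead z hzA b₀ hb₀ with h2 | h2
      · exact absurd h2 hzb
      · exact mem_nbr.mpr h2.symm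
    · exact mem_nbr.mpr (hc1 z h b₀ hb₀).symm
  have h1 := card_le_card hsub
  have h2 : u₂ ∉ (A.erase b₀) ∪ (W ∩ nbr G u₁) := by
    intro hc
    rcases mem_union.mp hc with h | h
    · exact hAX u₂ (mem_of_mem_erase h) hu₂X
    · exact hu₂W (mem_inter.mp h).1
  rw [card_insert_of_notMem h2] at h1
  have hdisjAW : Disjoint (A.erase b₀) (W ∩ nbr G u₁) := by
    rw [Finset.disjoint_left]
    intro z hz hz2
    exact hAX z (mem_of_mem_erase hz) (mem_union.mpr (Or.inl (mem_inter.mp hz2).1))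
  rw [card_union_of_disjoint hdisjAW] at h1
  have h3 : A.card ≤ (A.erase b₀).card + 1 := by
    rcases Classical.em (b₀ ∈ A) with h | h
    · rw [card_erase_of_mem h]; omega
    · rw [erase_eq_of_notMem h]; omega
  have h4 := hbigB b₀ hb₀
  have e1 : dg G b₀ = (nbr G b₀).card := rfl
  omega

end CWS
namespace CWS

open Finset

open scoped Classical

variable {V : Type*} [Fintype V] [DecidableEq V]

/-- ball of radius `r` around `v`, through vertices avoiding `S` -/
noncomputable def ball (G : SimpleGraph V) (S : Finset V) : ℕ → V → Finset V
  | 0, v => {v}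
  | r+1, v => (ball G S r v) ∪ (ball G S r v).biUnion (fun z => nbr G z \ S)

lemma self_mem_ball {G : SimpleGraph V} {S : Finset V} {r : ℕ} {v : V} :
    v ∈ ball G S r v := by
  induction r with
  | zero => simp [ball]
  | succ r ih => exact mem_union.mpr (Or.inl ih)

lemma ball_succ_subset {G : SimpleGraph V} {S : Finset V} {r : ℕ} {v : V} :
    ball G S r v ⊆ ball G S (r+1) v := subset_union_left

lemma ball_mono {G : SimpleGraph V} {S : Finset V} {r r' : ℕ} (h : r ≤ r') {v : V} :
    ball G S r v ⊆ ball G S r' v := by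
  induction r' with
  | zero => rw [Nat.le_zero.mp h]
  | succ r' ih =>
    rcases Nat.lt_or_ge r (r'+1) with h2 | h2
    · exact (ih (by omega)).trans ball_succ_subset
    · have : r = r' + 1 := by omega
      rw [this]
  
lemma ball_step {G : SimpleGraph V} {S : Finset V} {r : ℕ} {v z w : V}
    (hz : z ∈ ball G S r v) (hadj : G.Adj z w) (hw : w ∉ S) :
    w ∈ ball G S (r+1) v := by
  refine mem_union.mpr (Or.inr (mem_biUnion.mpr ⟨z, hz, ?_⟩))
  exact mem_sdiff.mpr ⟨mem_nbr.mpr hadj, hw⟩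

lemma ball_nonS {G : SimpleGraph V} {S : Finset V} {r : ℕ} {v z : V}
    (hv : v ∉ S) (hz : z ∈ ball G S r v) : z ∉ S := by
  induction r with
  | zero => rw [ball, mem_singleton] at hz; subst hz; exact hv
  | succ r ih =>
    rcases mem_union.mp hz with h | h
    · exact ih h
    · obtain ⟨y, _, hy2⟩ := mem_biUnion.mp h
      exact (mem_sdiff.mp hy2).2

lemma ball_card {G : SimpleGraph V} {S : Finset V} {θ : ℕ}
    (hsmall : ∀ z, z ∉ S → dg G z < θ) {v : V} (hv : v ∉ S) :
    ∀ r, (ball G S r v).card ≤ (θ + 1) ^ r := by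
  intro r
  induction r with
  | zero => simp [ball]
  | succ r ih =>
    have hstep : ((ball G S r v).biUnion (fun z => nbr G z \ S)).card ≤
        (ball G S r v).card * θ := by
      calc ((ball G S r v).biUnion (fun z => nbr G z \ S)).card
          ≤ ∑ z ∈ ball G S r v, (nbr G z \ S).card := card_biUnion_le
      _ ≤ (ball G S r v).card • θ := by
          refine Finset.sum_le_card_nsmul _ _ _ ?_
          intro z hz
          have hzS : z ∉ S := ball_nonS hv hz
          have h1 : (nbr G z \ S).card ≤ dg G z := card_le_card sdiff_subset
          have h2 := hsmall z hzS
          omega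
      _ = (ball G S r v).card * θ := by rw [smul_eq_mul]
    calc (ball G S (r+1) v).card
        ≤ (ball G S r v).card + ((ball G S r v).biUnion (fun z => nbr G z \ S)).card :=
          card_union_le _ _
    _ ≤ (ball G S r v).card * (θ + 1) := by
        have := hstep
        nlinarith [hstep]
    _ ≤ (θ + 1) ^ r * (θ + 1) := Nat.mul_le_mul_right _ ih
    _ = (θ + 1) ^ (r + 1) := (pow_succ _ _).symm

/-- greedy selection of pairwise-far vertices -/
lemma farSelect {G : SimpleGraph V} {S : Finset V} {θ : ℕ}
    (hsmall : ∀ z, z ∉ S → dg G z < θ) :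
    ∀ (q : ℕ) (P : Finset V), (∀ x ∈ P, x ∉ S) → q * (θ + 1) ^ 10 ≤ P.card →
    ∃ L : List V, L.length = q ∧ L.Nodup ∧ (∀ x ∈ L, x ∈ P) ∧
      L.Pairwise (fun a b => b ∉ ball G S 10 a) := by
  intro q
  induction q with
  | zero => intro P _ _; exact ⟨[], rfl, List.nodup_nil, by simp, List.Pairwise.nil⟩
  | succ q ih =>
    intro P hPS hPcard
    have hPne : P.Nonempty := by
      rw [← card_pos]
      have : 1 ≤ (θ + 1) ^ 10 := Nat.one_le_pow _ _ (by omega)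
      nlinarith
    obtain ⟨x₀, hx₀⟩ := hPne
    set P' := P \ ball G S 10 x₀ with hP'
    have hP'card : q * (θ + 1) ^ 10 ≤ P'.card := by
      have h1 : P.card ≤ P'.card + (ball G S 10 x₀).card := by
        calc P.card ≤ (P' ∪ ball G S 10 x₀).card := by
              refine card_le_card ?_
              intro z hz
              rcases Classical.em (z ∈ ball G S 10 x₀) with h | h
              · exact mem_union.mpr (Or.inr h)
              · exact mem_union.mpr (Or.inl (mem_sdiff.mpr ⟨hz, h⟩))
        _ ≤ _ := card_union_le _ _
      have h2 := ball_card hsmall (hPS x₀ hx₀) 10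
      have h3 : (q + 1) * (θ + 1) ^ 10 = q * (θ + 1) ^ 10 + (θ + 1) ^ 10 := by ring
      omega
    obtain ⟨L', hlen, hnodup, hmem, hpair⟩ := ih P' (fun x hx => hPS x (mem_sdiff.mp hx).1)
      hP'card
    refine ⟨x₀ :: L', by simp [hlen], ?_, ?_, ?_⟩
    · refine List.nodup_cons.mpr ⟨?_, hnodup⟩
      intro hc
      have := hmem x₀ hc
      exact (mem_sdiff.mp this).2 self_mem_ball
    · intro x hx
      rcases List.mem_cons.mp hx with rfl | hx2
      · exact hx₀
      · exact (mem_sdiff.mp (hmem x hx2)).1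
    · refine List.pairwise_cons.mpr ⟨?_, hpair⟩
      intro b hb
      exact (mem_sdiff.mp (hmem b hb)).2

lemma pairwise_or {R : V → V → Prop} :
    ∀ (L : List V), L.Pairwise R → ∀ u ∈ L, ∀ v ∈ L, u ≠ v → R u v ∨ R v u := by
  intro L
  induction L with
  | nil => intro _ u hu; simp at hu
  | cons h t ih =>
    intro hpair u hu v hv huv
    obtain ⟨hhead, htail⟩ := List.pairwise_cons.mp hpair
    rcases List.mem_cons.mp hu with rfl | hu2
    · rcases List.mem_cons.mp hv with rfl | hv2
      · exact absurd rfl huv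
      · exact Or.inl (hhead v hv2)
    · rcases List.mem_cons.mp hv with rfl | hv2
      · exact Or.inr (hhead u hu2)
      · exact ih htail u hu2 v hv2 huv

end CWS
namespace CWS

open Finset

open scoped Classical

variable {V : Type*} [Fintype V] [DecidableEq V]

namespace SwOK

variable {G : SimpleGraph V} {p q r s : V} (h : SwOK G p q r s)

include h

lemma not_adj_pq : ¬ (sw G p q r s).Adj p q := by
  rintro ⟨hne, ⟨_, h2, _⟩ | hh | hh⟩
  · exact h2 (Or.inl ⟨rfl, rfl⟩)
  · rcases hh with ⟨_, rfl⟩ | ⟨rfl, _⟩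
    · exact h.ne_qr rfl
    · exact h.ne_pr rfl
  · rcases hh with ⟨rfl, _⟩ | ⟨rfl, _⟩
    · exact h.ne_pq rfl
    · exact h.ne_ps rfl

lemma not_adj_rs : ¬ (sw G p q r s).Adj r s := by
  rw [sw_comm2]
  exact h.swok_comm2.not_adj_pq

end SwOK

/-- Linking up all the pool pairs by switches. -/
lemma poolLinkPairs (k : ℕ) (G₀ : SimpleGraph V) (S Pf : Finset V)
    (hPfS : ∀ x ∈ Pf, x ∉ S)
    (hdeg : ∀ x ∈ Pf, k ≤ dg G₀ x + 1)
    (hsize : Pf.card + S.card ≤ k)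
    (hfar : ∀ x ∈ Pf, ∀ y ∈ Pf, x ≠ y →
      (y ∉ ball G₀ S 10 x ∨ x ∉ ball G₀ S 10 y)) :
    ∀ (PL : List (V × V)), (∀ p ∈ PL, p.1 ∈ Pf ∧ p.2 ∈ Pf ∧ p.1 ≠ p.2) →
    ∀ (G : SimpleGraph V) (U : Finset V),
    SameDeg G₀ G →
    (∀ y z, G.Adj y z → G₀.Adj y z ∨ (y ∈ Pf ∧ z ∈ Pf) ∨ (y ∈ U ∧ z ∈ U)) →
    (∀ x ∈ Pf, ∀ u ∈ U, ¬ G.Adj x u) →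
    Disjoint U Pf →
    ∃ G', SameDeg G G' ∧ (∀ y ∈ Pf, ∀ z ∈ Pf, G.Adj y z → G'.Adj y z) ∧
      (∀ p ∈ PL, G'.Adj p.1 p.2) := by
  intro PL
  induction PL with
  | nil =>
    intro _ G U _ _ _ _
    exact ⟨G, SameDeg.refl G, fun y _ z _ h => h, by simp⟩
  | cons pp PL' ih =>
    intro hPL G U hsame hI2 hI7 hI6
    obtain ⟨hx, hx', hxne⟩ := hPL pp (List.mem_cons_self)
    set x := pp.1 with hxdef
    set x' := pp.2 with hx'def
    have hPL' : ∀ p ∈ PL', p.1 ∈ Pf ∧ p.2 ∈ Pf ∧ p.1 ≠ p.2 :=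
      fun p hp => hPL p (List.mem_cons_of_mem pp hp)
    by_cases hadjxx : G.Adj x x'
    · obtain ⟨G', hsame', hmono', hPL'adj⟩ := ih hPL' G U hsame hI2 hI7 hI6
      refine ⟨G', hsame', hmono', ?_⟩
      intro p hp
      rcases List.mem_cons.mp hp with rfl | hp2
      · exact hmono' x hx x' hx' hadjxx
      · exact hPL'adj p hp2
    · -- select b
      have hcount : ∀ (y y' : V), y ∈ Pf → y' ∈ Pf → y ≠ y' → ¬ G.Adj y y' →
          ∃ b, G.Adj y b ∧ b ∉ S ∧ b ∉ Pf := by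
        intro y y' hy hy' hyy' hnadj
        by_contra hc
        push_neg at hc
        have hsub : nbr G y ⊆ (S.filter (fun z => G.Adj y z)) ∪ ((Pf.erase y).erase y') := by
          intro z hz
          have hadj := mem_nbr.mp hz
          rcases Classical.em (z ∈ S) with h | h
          · exact mem_union.mpr (Or.inl (mem_filter.mpr ⟨h, hadj⟩))
          · have hzPf : z ∈ Pf := hc z hadj h
            refine mem_union.mpr (Or.inr (mem_erase.mpr ⟨?_, mem_erase.mpr ⟨?_, hzPf⟩⟩))
            · intro hzy; rw [hzy] at hadj; exact hnadj hadj
            · intro hzy; rw [hzy] at hadj; exact (G.loopless.irrefl y) hadj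
        have h1 := card_le_card hsub
        have h2 := card_union_le (S.filter (fun z => G.Adj y z)) ((Pf.erase y).erase y')
        have h3 : (S.filter (fun z => G.Adj y z)).card ≤ S.card := card_le_card (filter_subset _ _)
        have h4 : ((Pf.erase y).erase y').card + 2 ≤ Pf.card := by
          have hy'e : y' ∈ Pf.erase y := mem_erase.mpr ⟨hyy'.symm, hy'⟩
          rw [card_erase_of_mem hy'e, card_erase_of_mem hy]
          have : 1 < Pf.card := one_lt_card.mpr ⟨y, hy, y', hy', hyy'⟩
          omega
        have h5 := hdeg y hy
        have h6 := hsame y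
        have e1 : dg G y = (nbr G y).card := rfl
        omega
      obtain ⟨b, hadjxb, hbS, hbPf⟩ := hcount x x' hx hx' hxne hadjxx
      obtain ⟨c, hadjxc, hcS, hcPf⟩ := hcount x' x hx' hx hxne.symm (fun h => hadjxx h.symm)
      have hbU : b ∉ U := fun hc2 => hI7 x hx b hc2 hadjxb
      have hcU : c ∉ U := fun hc2 => hI7 x' hx' c hc2 hadjxc
      -- b, c are original neighbours
      have hb0 : G₀.Adj x b := by
        rcases hI2 x b hadjxb with h | ⟨_, h⟩ | ⟨h, _⟩
        · exact h
        · exact absurd h hbPf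
        · exact absurd (disjoint_left.mp hI6 h hx) (fun hh => hh)
      have hc0 : G₀.Adj x' c := by
        rcases hI2 x' c hadjxc with h | ⟨_, h⟩ | ⟨h, _⟩
        · exact h
        · exact absurd h hcPf
        · exact absurd (disjoint_left.mp hI6 h hx') (fun hh => hh)
      have hball_b : b ∈ ball G₀ S 1 x := ball_step self_mem_ball hb0 hbS
      have hball_c : c ∈ ball G₀ S 1 x' := ball_step self_mem_ball hc0 hcS
      have hfarx := hfar x hx x' hx' hxne
      -- b ≠ c
      have hbc : b ≠ c := by
        rintro rfl
        rcases hfarx with h | h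
        · have hm : x' ∈ ball G₀ S 2 x := ball_step hball_b hc0.symm (hPfS x' hx')
          exact h (ball_mono (by omega) hm)
        · have hm : x ∈ ball G₀ S 2 x' := ball_step hball_c hb0.symm (hPfS x hx)
          exact h (ball_mono (by omega) hm)
      -- ¬ G.Adj b c
      have hnadjbc : ¬ G.Adj b c := by
        intro hadj
        rcases hI2 b c hadj with h | ⟨h, _⟩ | ⟨_, h⟩
        · rcases hfarx with h2 | h2
          · have h3 : c ∈ ball G₀ S 2 x := ball_step hball_b h hcS
            have h4 : x' ∈ ball G₀ S 3 x := ball_step h3 hc0.symm (hPfS x' hx')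
            exact h2 (ball_mono (by omega) h4)
          · have h3 : b ∈ ball G₀ S 2 x' := ball_step hball_c h.symm hbS
            have h4 : x ∈ ball G₀ S 3 x' := ball_step h3 hb0.symm (hPfS x hx)
            exact h2 (ball_mono (by omega) h4)
        · exact hbPf h
        · exact hcU h
      have hok : SwOK G x b x' c := ⟨hadjxb, hadjxc, hadjxx, hnadjbc, hxne, hbc⟩
      set G₁ := sw G x b x' c with hG₁def
      set U₁ : Finset V := insert b (insert c U) with hU₁def
      have hmemU₁ : ∀ u ∈ U₁, u = b ∨ u = c ∨ u ∈ U := by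
        intro u hu
        rcases mem_insert.mp hu with rfl | hu2
        · exact Or.inl rfl
        rcases mem_insert.mp hu2 with rfl | hu3
        · exact Or.inr (Or.inl rfl)
        · exact Or.inr (Or.inr hu3)
      -- invariants for G₁
      have hI6₁ : Disjoint U₁ Pf := by
        rw [Finset.disjoint_left]
        intro u hu huPf
        rcases hmemU₁ u hu with rfl | rfl | h
        · exact hbPf huPf
        · exact hcPf huPf
        · exact disjoint_left.mp hI6 h huPf
      have hI2₁ : ∀ y z, G₁.Adj y z → G₀.Adj y z ∨ (y ∈ Pf ∧ z ∈ Pf) ∨ (y ∈ U₁ ∧ z ∈ U₁) := by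
        intro y z hadj
        rcases hok.adj_cases hadj with h | h | h
        · rcases hI2 y z h with h2 | h2 | ⟨h2, h3⟩
          · exact Or.inl h2
          · exact Or.inr (Or.inl h2)
          · refine Or.inr (Or.inr ⟨?_, ?_⟩) <;>
              [exact mem_insert.mpr (Or.inr (mem_insert.mpr (Or.inr h2)));
               exact mem_insert.mpr (Or.inr (mem_insert.mpr (Or.inr h3)))]
        · rcases h with ⟨rfl, rfl⟩ | ⟨rfl, rfl⟩
          · exact Or.inr (Or.inl ⟨hx, hx'⟩)
          · exact Or.inr (Or.inl ⟨hx', hx⟩)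
        · rcases h with ⟨rfl, rfl⟩ | ⟨rfl, rfl⟩
          · exact Or.inr (Or.inr ⟨mem_insert_self _ _,
              mem_insert.mpr (Or.inr (mem_insert_self _ _))⟩)
          · exact Or.inr (Or.inr ⟨mem_insert.mpr (Or.inr (mem_insert_self _ _)),
              mem_insert_self _ _⟩)
      have hfar2 : ∀ p ∈ Pf, p ≠ x → ¬ G₀.Adj p b := by
        intro p hp hpx hadj
        have hbp : b ∈ ball G₀ S 1 p := ball_step self_mem_ball hadj hbS
        rcases hfar p hp x hx hpx with h | h
        · have hm : x ∈ ball G₀ S 2 p := ball_step hbp hb0.symm (hPfS x hx)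
          exact h (ball_mono (by omega) hm)
        · have hm : p ∈ ball G₀ S 2 x := ball_step hball_b hadj.symm (hPfS p hp)
          exact h (ball_mono (by omega) hm)
      have hfar2' : ∀ p ∈ Pf, p ≠ x' → ¬ G₀.Adj p c := by
        intro p hp hpx hadj
        have hcp : c ∈ ball G₀ S 1 p := ball_step self_mem_ball hadj hcS
        rcases hfar p hp x' hx' hpx with h | h
        · have hm : x' ∈ ball G₀ S 2 p := ball_step hcp hc0.symm (hPfS x' hx')
          exact h (ball_mono (by omega) hm)
        · have hm : p ∈ ball G₀ S 2 x' := ball_step hball_c hadj.symm (hPfS p hp)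
          exact h (ball_mono (by omega) hm)
      have hI7₁ : ∀ p ∈ Pf, ∀ u ∈ U₁, ¬ G₁.Adj p u := by
        intro p hp u hu hadj
        rcases hmemU₁ u hu with hub | huc | huU
        · -- u = b
          subst hub
          by_cases hpx : p = x
          · subst hpx; exact hok.not_adj_pq hadj
          · rcases hok.adj_cases hadj with h | h | h
            · rcases hI2 p u h with h2 | ⟨_, h2⟩ | ⟨h2, _⟩
              · exact hfar2 p hp hpx h2
              · exact hbPf h2
              · exact disjoint_left.mp hI6 h2 hp
            · rcases h with ⟨h1, h2⟩ | ⟨h1, h2⟩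
              · exact hpx h1
              · exact hbPf (h2 ▸ hx)
            · rcases h with ⟨h1, h2⟩ | ⟨h1, h2⟩
              · exact hbPf (h1 ▸ hp)
              · exact hcPf (h1 ▸ hp)
        · -- u = c
          subst huc
          by_cases hpx : p = x'
          · subst hpx; exact hok.not_adj_rs hadj
          · rcases hok.adj_cases hadj with h | h | h
            · rcases hI2 p u h with h2 | ⟨_, h2⟩ | ⟨h2, _⟩
              · exact hfar2' p hp hpx h2
              · exact hcPf h2
              · exact disjoint_left.mp hI6 h2 hp
            · rcases h with ⟨h1, h2⟩ | ⟨h1, h2⟩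
              · exact hcPf (h2 ▸ hx')
              · exact hpx h1
            · rcases h with ⟨h1, h2⟩ | ⟨h1, h2⟩
              · exact hbPf (h1 ▸ hp)
              · exact hcPf (h1 ▸ hp)
        · -- u ∈ U
          rcases hok.adj_cases hadj with h | h | h
          · exact hI7 p hp u huU h
          · rcases h with ⟨h1, h2⟩ | ⟨h1, h2⟩
            · exact disjoint_left.mp hI6 (h2 ▸ huU) hx'
            · exact disjoint_left.mp hI6 (h2 ▸ huU) hx
          · rcases h with ⟨h1, h2⟩ | ⟨h1, h2⟩
            · exact hbPf (h1 ▸ hp)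
            · exact hcPf (h1 ▸ hp)
      -- Pf-internal adjacency is preserved by this switch
      have hmono₁ : ∀ y ∈ Pf, ∀ z ∈ Pf, G.Adj y z → G₁.Adj y z := by
        intro y hy z hz hadj
        refine hok.adj_of_adj hadj ?_ ?_
        · rintro (⟨rfl, rfl⟩ | ⟨rfl, rfl⟩)
          · exact hbPf hz
          · exact hbPf hy
        · rintro (⟨rfl, rfl⟩ | ⟨rfl, rfl⟩)
          · exact hcPf hz
          · exact hcPf hy
      obtain ⟨G', hsame', hmono', hPL'adj⟩ := ih hPL' G₁ U₁ (hsame.trans hok.sameDeg)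
        hI2₁ hI7₁ hI6₁
      refine ⟨G', hok.sameDeg.trans hsame', ?_, ?_⟩
      · intro y hy z hz hadj
        exact hmono' y hy z hz (hmono₁ y hy z hz hadj)
      · intro p hp
        rcases List.mem_cons.mp hp with rfl | hp2
        · exact hmono' p.1 hx p.2 hx' hok.adj_new_pr
        · exact hPL'adj p hp2

end CWS
namespace CWS

open Finset

open scoped Classical

variable {V : Type*} [Fintype V] [DecidableEq V]

lemma dg_le_card (G : SimpleGraph V) (v : V) : dg G v ≤ Fintype.card V := by
  rw [← Finset.card_univ]
  exact card_le_card (subset_univ _)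

/-- Attach every member of a list to all of `S`, preserving `X`-internal edges. -/
lemma attachList (θ : ℕ) (S X : Finset V) (hSX : S ⊆ X) :
    ∀ (LL : List V) (G : SimpleGraph V),
    (∀ x ∈ LL, x ∈ X ∧ x ∉ S ∧ X.card ≤ dg G x + 1) →
    (∀ w ∈ S, θ + X.card + 3 ≤ dg G w) →
    (∀ v, v ∉ X → dg G v < θ) →
    ∃ G', SameDeg G G' ∧ (∀ u ∈ X, ∀ v ∈ X, G.Adj u v → G'.Adj u v) ∧
      (∀ x ∈ LL, ∀ w ∈ S, G'.Adj x w) := by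
  intro LL
  induction LL with
  | nil =>
    intro G _ _ _
    exact ⟨G, SameDeg.refl G, fun u _ v _ h => h, by simp⟩
  | cons x t ih =>
    intro G hmem hhub hsmall
    obtain ⟨hxX, hxS, hxdeg⟩ := hmem x (List.mem_cons_self)
    obtain ⟨G₁, hsame₁, hpres₁, hadj₁⟩ := attach θ _ G S X x rfl hSX hxX hxS hhub hsmall hxdeg
    obtain ⟨G₂, hsame₂, hpres₂, hadj₂⟩ := ih G₁
      (fun y hy => ⟨(hmem y (List.mem_cons_of_mem x hy)).1,
        (hmem y (List.mem_cons_of_mem x hy)).2.1,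
        (hsame₁ y) ▸ (hmem y (List.mem_cons_of_mem x hy)).2.2⟩)
      (fun w hw => (hsame₁ w) ▸ hhub w hw)
      (fun v hv => (hsame₁ v) ▸ hsmall v hv)
    refine ⟨G₂, hsame₁.trans hsame₂, fun u hu v hv h => hpres₂ u hu v hv (hpres₁ u hu v hv h), ?_⟩
    intro y hy w hw
    rcases List.mem_cons.mp hy with rfl | hy2
    · exact hpres₂ y hxX w (hSX hw) (hadj₁ w hw)
    · exact hadj₂ y hy2 w hw

theorem TstarGraph (k : ℕ) (hk : 3 ≤ k) (G : SimpleGraph V)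
    (hn : (100 * k^3 * 4^(k+1) + 2)^13 ≤ Fintype.card V)
    (hdegk : k ≤ (Finset.univ.filter (fun v => k ≤ dg G v + 1)).card)
    (hsum : 8 * k * Fintype.card V ≤
      4 * (∑ v, dg G v) + 17 * Fintype.card V + 8 * k * k) :
    ∃ G', SameDeg G G' ∧ HasCliqueK G' k := by
  have hcube : k^3 = k*k*k := by ring
  have h9 : 9 ≤ k*k := Nat.mul_le_mul hk hk
  have hk2cube : k*k ≤ k^3 := by
    rw [hcube]
    calc k*k = k*k*1 := by ring
    _ ≤ k*k*k := Nat.mul_le_mul_left _ (by omega)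
  have hkcube : k ≤ k^3 := by
    rw [hcube]
    calc k = 1*1*k := by ring
    _ ≤ k*k*k := Nat.mul_le_mul (Nat.mul_le_mul (by omega) (by omega)) le_rfl
  have hkk3 : 7 * k * k ≤ 100 * k^3 := by linarith
  have hk3 : k + 3 ≤ 100 * k^3 := by linarith
  set n := Fintype.card V with hndef
  set KK : ℕ := 100 * k^3 * 4^(k+1) with hKK
  set tau : ℕ → ℕ := fun j => 100 * k^3 * 4^j with htaudef
  have htau_le : ∀ i i', i ≤ i' → tau i ≤ tau i' := by
    intro i i' h
    exact Nat.mul_le_mul_left _ (Nat.pow_le_pow_right (by omega) h)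
  have htau0 : ∀ j, 100 * k^3 ≤ tau j := by
    intro j
    have : tau 0 ≤ tau j := htau_le 0 j (by omega)
    simpa [htaudef] using this
  have htau4 : ∀ j, tau (j+1) = 4 * tau j := by
    intro j
    simp only [htaudef, pow_succ]
    ring
  set SS : ℕ → Finset V := fun j => Finset.univ.filter (fun v => tau j ≤ dg G v) with hSSdef
  have hSS_anti : ∀ j, SS (j+1) ⊆ SS j := by
    intro j v hv
    rw [hSSdef, mem_filter] at hv ⊢
    exact ⟨hv.1, le_trans (htau_le j (j+1) (by omega)) hv.2⟩
  set BD : Finset V := Finset.univ.filter (fun v => k ≤ dg G v + 1) with hBDdef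
  by_cases hcase1 : k ≤ (SS 0).card
  · -- Case 1 : k vertices of huge degree
    obtain ⟨B, hBsub, hBcard⟩ := Finset.exists_subset_card_eq hcase1
    obtain ⟨G', hsame', hres⟩ := cliqueBigs k hk _ G B B rfl subset_rfl (le_of_eq hBcard)
      (fun v hv => by
        have := (mem_filter.mp (hBsub hv)).2
        have h0 := htau0 0
        omega)
    refine ⟨G', hsame', ?_⟩
    rcases hres with h | ⟨_, hpair⟩
    · exact h
    · exact ⟨B, hBcard, hpair⟩
  · -- Case 2 : find a gap
    push_neg at hcase1
    have hgap : ∃ j < k, (SS j).card = (SS (j+1)).card := by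
      by_contra hc
      push_neg at hc
      have hdec : ∀ j < k, (SS (j+1)).card < (SS j).card := by
        intro j hj
        have h1 := card_le_card (hSS_anti j)
        have h2 := hc j hj
        omega
      have hchain : ∀ j ≤ k, (SS j).card + j ≤ (SS 0).card := by
        intro j
        induction j with
        | zero => intro _; omega
        | succ j ihj =>
          intro hjk
          have h1 := ihj (by omega)
          have h2 := hdec j (by omega)
          omega
      have := hchain k le_rfl
      omega
    obtain ⟨j, hjk, hgapj⟩ := hgap
    set θ : ℕ := tau j with hθdef
    set S : Finset V := SS (j+1) with hSdef
    set σ : ℕ := S.card with hσdef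
    have hSeq : SS j = SS (j+1) :=
      (Finset.eq_of_subset_of_card_le (hSS_anti j) (le_of_eq hgapj)).symm
    have hsmallS : ∀ v, v ∉ S → dg G v < θ := by
      intro v hv
      by_contra hc
      push_neg at hc
      have : v ∈ SS j := mem_filter.mpr ⟨mem_univ v, hc⟩
      rw [hSeq] at this
      exact hv this
    have hhubS : ∀ s ∈ S, 4 * θ ≤ dg G s := by
      intro s hs
      have h2 : tau (j+1) ≤ dg G s := (mem_filter.mp hs).2
      rw [hθdef, ← htau4 j]
      exact h2
    have hθKK : θ ≤ KK := htau_le j (k+1) (by omega)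
    have hσk : σ + 1 ≤ k := by
      have h1 : S ⊆ SS 0 := by
        rw [hSdef, ← hSeq]
        intro v hv
        rw [mem_filter] at hv ⊢
        exact ⟨hv.1, le_trans (htau_le 0 j (by omega)) hv.2⟩
      have := card_le_card h1
      omega
    have hSBD : S ⊆ BD := by
      intro s hs
      have h1 := hhubS s hs
      have h0 := htau0 j
      rw [hBDdef, mem_filter]
      refine ⟨mem_univ s, by nlinarith⟩
    have hBDS : k - σ ≤ (BD \ S).card := by
      have h1 : BD.card ≤ (BD \ S).card + S.card := by
        rw [card_sdiff_of_subset hSBD]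
        have := card_le_card hSBD
        omega
      omega
    have hhub7 : ∀ s ∈ S, 7 * k * k ≤ dg G s := by
      intro s hs
      have h1 := hhubS s hs
      have h0 := htau0 j
      omega
    have hhubattach : ∀ (X' : Finset V), X'.card ≤ k → ∀ s ∈ S, θ + X'.card + 3 ≤ dg G s := by
      intro X' hX' s hs
      have h1 := hhubS s hs
      have h0 := htau0 j
      omega
    by_cases hσ1 : σ = k - 1
    · -- Subcase 2a
      obtain ⟨u, hu⟩ : (BD \ S).Nonempty := by
        rw [← card_pos]; omega
      have huBD : u ∈ BD := (mem_sdiff.mp hu).1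
      have huS : u ∉ S := (mem_sdiff.mp hu).2
      have hudeg : k ≤ dg G u + 1 := (mem_filter.mp huBD).2
      set X : Finset V := insert u S with hXdef
      have hXcard : X.card = k := by
        rw [hXdef, card_insert_of_notMem huS]
        omega
      obtain ⟨G₂, hsame₂, hres₂⟩ := cliqueBigs k hk _ G S X rfl (subset_insert u S)
        (le_of_eq hXcard) hhub7
      rcases hres₂ with hclique | ⟨hpres₂, hpair₂⟩
      · exact ⟨G₂, hsame₂, hclique⟩
      obtain ⟨G₃, hsame₃, hpres₃, hadj₃⟩ := attachList θ S X (subset_insert u S) [u] G₂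
        (by
          intro z hz
          rw [List.mem_singleton] at hz
          refine ⟨?_, ?_, ?_⟩
          · rw [hz]; exact mem_insert_self u S
          · rw [hz]; exact huS
          · rw [hz, ← hsame₂ u]; omega)
        (fun w hw => by rw [← hsame₂ w]; exact hhubattach X (le_of_eq hXcard) w hw)
        (fun v hv => by
          rw [← hsame₂ v]
          exact hsmallS v (fun hc => hv (mem_insert_of_mem hc)))
      refine ⟨G₃, hsame₂.trans hsame₃, X, hXcard, ?_⟩
      intro a ha b hb hab
      rcases mem_insert.mp ha with rfl | haS
      · rcases mem_insert.mp hb with rfl | hbS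
        · exact absurd rfl hab
        · exact hadj₃ a (List.mem_singleton_self a) b hbS
      · rcases mem_insert.mp hb with rfl | hbS
        · exact (hadj₃ b (List.mem_singleton_self b) a haS).symm
        · exact hpres₃ a (mem_insert_of_mem haS) b (mem_insert_of_mem hbS)
            (hpair₂ a haS b hbS hab)
    by_cases hσ2 : σ = k - 2
    · -- Subcase 2b
      obtain ⟨u₁, hu₁, u₂, hu₂, hu12⟩ : ∃ u₁ ∈ BD \ S, ∃ u₂ ∈ BD \ S, u₁ ≠ u₂ := by
        have h2 : 1 < (BD \ S).card := by omega
        obtain ⟨a, ha, b, hb, hab⟩ := Finset.one_lt_card.mp h2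
        exact ⟨a, ha, b, hb, hab⟩
      have hd₁ : k ≤ dg G u₁ + 1 := (mem_filter.mp (mem_sdiff.mp hu₁).1).2
      have hd₂ : k ≤ dg G u₂ + 1 := (mem_filter.mp (mem_sdiff.mp hu₂).1).2
      have hXk2 : (S ∪ {u₁, u₂}).card ≤ k := by
        have h1 := card_union_le S ({u₁, u₂} : Finset V)
        have h2 : ({u₁, u₂} : Finset V).card ≤ 2 := by
          have := card_insert_le u₁ ({u₂} : Finset V)
          simpa using this
        omega
      obtain ⟨G₁, x, y, hsame₁, hadjxy, hxS, hyS, hdx, hdy⟩ := goodEdge k hk G S u₁ u₂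
        (mem_sdiff.mp hu₁).2 (mem_sdiff.mp hu₂).2 hu12 hd₁ hd₂ hXk2
      have hxyne : x ≠ y := hadjxy.ne
      set X : Finset V := insert x (insert y S) with hXdef
      have hXcard : X.card = k := by
        rw [hXdef, card_insert_of_notMem, card_insert_of_notMem hyS]
        · omega
        · intro hc
          rcases mem_insert.mp hc with h | h
          · exact hxyne h
          · exact hxS h
      have hSX : S ⊆ X := fun s hs => mem_insert_of_mem (mem_insert_of_mem hs)
      obtain ⟨G₂, hsame₂, hres₂⟩ := cliqueBigs k hk _ G₁ S X rfl hSX (le_of_eq hXcard)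
        (fun s hs => by rw [← hsame₁ s]; exact hhub7 s hs)
      rcases hres₂ with hclique | ⟨hpres₂, hpair₂⟩
      · exact ⟨G₂, hsame₁.trans hsame₂, hclique⟩
      have hxX : x ∈ X := mem_insert_self x _
      have hyX : y ∈ X := mem_insert_of_mem (mem_insert_self y S)
      have hedge₂ : G₂.Adj x y := hpres₂ x hxX y hyX hadjxy
      obtain ⟨G₃, hsame₃, hpres₃, hadj₃⟩ := attachList θ S X hSX [x, y] G₂
        (by
          intro z hz
          rcases List.mem_cons.mp hz with hzx | hz2
          · refine ⟨?_, ?_, ?_⟩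
            · rw [hzx]; exact hxX
            · rw [hzx]; exact hxS
            · rw [hzx, ← hsame₂ x, ← hsame₁ x]; omega
          · rw [List.mem_singleton] at hz2
            refine ⟨?_, ?_, ?_⟩
            · rw [hz2]; exact hyX
            · rw [hz2]; exact hyS
            · rw [hz2, ← hsame₂ y, ← hsame₁ y]; omega)
        (fun w hw => by
          rw [← hsame₂ w, ← hsame₁ w]
          exact hhubattach X (le_of_eq hXcard) w hw)
        (fun v hv => by
          rw [← hsame₂ v, ← hsame₁ v]
          exact hsmallS v (fun hc => hv (hSX hc)))
      refine ⟨G₃, hsame₁.trans (hsame₂.trans hsame₃), X, hXcard, ?_⟩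
      have hxmem : x ∈ ([x, y] : List V) := by simp
      have hymem : y ∈ ([x, y] : List V) := by simp
      intro a ha b hb hab
      rcases mem_insert.mp ha with rfl | ha2
      · rcases mem_insert.mp hb with rfl | hb2
        · exact absurd rfl hab
        rcases mem_insert.mp hb2 with rfl | hbS
        · exact hpres₃ a hxX b hyX hedge₂
        · exact hadj₃ a hxmem b hbS
      rcases mem_insert.mp ha2 with rfl | haS
      · rcases mem_insert.mp hb with rfl | hb2
        · exact (hpres₃ b hxX a hyX hedge₂).symm
        rcases mem_insert.mp hb2 with rfl | hbS
        · exact absurd rfl hab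
        · exact hadj₃ a hymem b hbS
      · rcases mem_insert.mp hb with rfl | hb2
        · exact (hadj₃ b hxmem a haS).symm
        rcases mem_insert.mp hb2 with rfl | hbS
        · exact (hadj₃ b hymem a haS).symm
        · exact hpres₃ a (hSX haS) b (hSX hbS) (hpair₂ a haS b hbS hab)
    · -- Subcase 2c : the pool case
      have hσ3 : σ + 3 ≤ k := by omega
      set P : Finset V := BD \ S with hPdef
      set m : ℕ := P.card with hmdef
      have hPsmall : ∀ v ∈ P, dg G v < θ := fun v hv => hsmallS v (mem_sdiff.mp hv).2
      have hconv : ∑ v ∈ S, dg G v ≤ σ * n := by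
        calc ∑ v ∈ S, dg G v ≤ ∑ _v ∈ S, n := sum_le_sum (fun v _ => dg_le_card G v)
        _ = σ * n := by rw [sum_const, smul_eq_mul]
      have hPsum : ∑ v ∈ P, dg G v ≤ m * θ := by
        calc ∑ v ∈ P, dg G v ≤ ∑ _v ∈ P, θ := sum_le_sum (fun v hv => le_of_lt (hPsmall v hv))
        _ = m * θ := by rw [sum_const, smul_eq_mul]
      set R : Finset V := (univ \ S) \ P with hRdef
      have hPsub : P ⊆ univ \ S := fun v hv => mem_sdiff.mpr ⟨mem_univ v, (mem_sdiff.mp hv).2⟩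
      have hsplit1 : ∑ v ∈ univ \ S, dg G v + ∑ v ∈ S, dg G v = ∑ v, dg G v :=
        sum_sdiff (subset_univ S)
      have hsplit2 : ∑ v ∈ R, dg G v + ∑ v ∈ P, dg G v = ∑ v ∈ univ \ S, dg G v :=
        sum_sdiff hPsub
      have hRdeg : ∀ v ∈ R, dg G v + 2 ≤ k := by
        intro v hv
        have hvS : v ∉ S := (mem_sdiff.mp ((mem_sdiff.mp hv).1)).2
        have hvP : v ∉ P := (mem_sdiff.mp hv).2
        by_contra hc
        push_neg at hc
        have hvBD : v ∈ BD := mem_filter.mpr ⟨mem_univ v, by omega⟩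
        exact hvP (mem_sdiff.mpr ⟨hvBD, hvS⟩)
      have hRsum : ∑ v ∈ R, dg G v + 2 * R.card ≤ k * R.card := by
        have h1 : ∑ v ∈ R, (dg G v + 2) ≤ ∑ _v ∈ R, k := sum_le_sum hRdeg
        rw [sum_add_distrib, sum_const, sum_const, smul_eq_mul, smul_eq_mul] at h1
        linarith [h1]
      have hcards : R.card + m + σ = n := by
        have huniv : (univ : Finset V).card = n := Finset.card_univ.trans hndef.symm
        have h3 : S.card ≤ (univ : Finset V).card := card_le_card (subset_univ S)
        have h1 : (univ \ S).card + σ = n := by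
          rw [card_sdiff_of_subset (subset_univ S)]
          omega
        have h5 := card_le_card hPsub
        have h4 : R.card + m = (univ \ S).card := by
          rw [hRdef, card_sdiff_of_subset hPsub]
          omega
        omega
      have hmulk : k * R.card + k * m + k * σ = k * n := by rw [← hcards]; ring
      have hσn : (σ + 3) * (4 * n) ≤ k * (4 * n) := Nat.mul_le_mul_right _ hσ3
      have f12 : 3 * m ≤ k * m := Nat.mul_le_mul_right m hk
      have f13 : 3 * σ ≤ k * σ := Nat.mul_le_mul_right σ hk
      have hm3n : 3 * n ≤ 4 * (m * θ) + 8 * (k * k) := by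
        linarith [hsum, hconv, hPsum, hRsum, hmulk, hσn, f12, f13, hcards,
          hsplit1, hsplit2]
      -- lower bound on the pool size
      have hKKge : 100 * k^3 ≤ KK := by
        have h1 : (1:ℕ) ≤ 4^(k+1) := Nat.one_le_pow _ _ (by omega)
        calc 100 * k^3 = 100 * k^3 * 1 := by ring
        _ ≤ 100 * k^3 * 4^(k+1) := Nat.mul_le_mul_left _ h1
      have hθ1 : θ + 1 ≤ KK + 2 := by
        have := hθKK
        omega
      have hkKK : k ≤ KK + 2 := by linarith [hk3, hKKge]
      have hmM : k * (θ+1)^10 ≤ m := by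
        by_contra hc
        push_neg at hc
        have e2 : (θ+1)^10 ≤ (KK+2)^10 := Nat.pow_le_pow_left hθ1 10
        have e5 : 4 * (m * θ) ≤ 4 * ((KK+2) * (KK+2)^10 * (KK+2)) := by
          have h1 : m * θ ≤ (k * (θ+1)^10) * θ :=
            Nat.mul_le_mul_right θ (le_of_lt hc)
          have h2 : (k * (θ+1)^10) * θ ≤ ((KK+2) * (KK+2)^10) * (KK+2) := by
            refine Nat.mul_le_mul ?_ (by omega)
            exact Nat.mul_le_mul hkKK e2
          omega
        have e6 : 4 * ((KK+2) * (KK+2)^10 * (KK+2)) + 8 * (k * k) ≤ 5 * (KK+2)^12 := by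
          have h1 : (KK+2) * (KK+2)^10 * (KK+2) = (KK+2)^12 := by ring
          have h2 : 8 * (k * k) ≤ (KK+2)^12 := by
            have h3 : 8 * (k * k) ≤ 100 * k^3 := by linarith [hk2cube]
            have h4 : (KK+2)^1 ≤ (KK+2)^12 := Nat.pow_le_pow_right (by omega) (by omega)
            have h5 : (KK+2)^1 = KK + 2 := pow_one _
            omega
          omega
        have e7 : 5 * (KK+2)^12 < (KK+2)^13 := by
          have h1 : (KK+2)^13 = (KK+2) * (KK+2)^12 := by ring
          have h2 : (0:ℕ) < (KK+2)^12 := Nat.pow_pos (by omega)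
          have h3 : 5 < KK + 2 := by
            have := hKKge
            have := hkcube
            omega
          calc 5 * (KK+2)^12 < (KK+2) * (KK+2)^12 := (Nat.mul_lt_mul_right h2).mpr h3
          _ = (KK+2)^13 := h1.symm
        have : 3 * n < n := by
          calc 3 * n ≤ 4 * (m * θ) + 8 * (k * k) := hm3n
          _ ≤ 4 * ((KK+2) * (KK+2)^10 * (KK+2)) + 8 * (k * k) := by omega
          _ ≤ 5 * (KK+2)^12 := e6
          _ < (KK+2)^13 := e7
          _ ≤ n := hn
        omega
      -- select far-apart pool vertices
      set q : ℕ := k - σ with hqdef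
      have hqσ : q + σ = k := by omega
      have hqsel : q * (θ+1)^10 ≤ P.card := by
        have h1 : q * (θ+1)^10 ≤ k * (θ+1)^10 :=
          Nat.mul_le_mul_right _ (by omega)
        omega
      obtain ⟨L, hlen, hnodup, hmemP, hpairfar⟩ := farSelect hsmallS q P
        (fun x hx => (mem_sdiff.mp hx).2) hqsel
      set Pf : Finset V := L.toFinset with hPfdef
      have hPfcard : Pf.card = q := by
        rw [hPfdef, List.card_toFinset, hnodup.dedup, hlen]
      have hPfP : ∀ x ∈ Pf, x ∈ P := fun x hx => hmemP x (List.mem_toFinset.mp hx)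
      have hPfS : ∀ x ∈ Pf, x ∉ S := fun x hx => (mem_sdiff.mp (hPfP x hx)).2
      have hPfdeg : ∀ x ∈ Pf, k ≤ dg G x + 1 := fun x hx =>
        (mem_filter.mp (mem_sdiff.mp (hPfP x hx)).1).2
      have hfarPf : ∀ x ∈ Pf, ∀ y ∈ Pf, x ≠ y →
          (y ∉ ball G S 10 x ∨ x ∉ ball G S 10 y) := by
        intro x hx y hy hxy
        exact pairwise_or L hpairfar x (List.mem_toFinset.mp hx) y (List.mem_toFinset.mp hy) hxy
      have hsizePf : Pf.card + S.card ≤ k := by omega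
      set PL : List (V × V) := ((Pf ×ˢ Pf).filter (fun p => p.1 ≠ p.2)).toList with hPLdef
      have hPL : ∀ p ∈ PL, p.1 ∈ Pf ∧ p.2 ∈ Pf ∧ p.1 ≠ p.2 := by
        intro p hp
        have h1 := Finset.mem_toList.mp hp
        rw [mem_filter, mem_product] at h1
        exact ⟨h1.1.1, h1.1.2, h1.2⟩
      obtain ⟨G₁, hsame₁, _hmono₁, hPLadj⟩ := poolLinkPairs k G S Pf hPfS hPfdeg hsizePf
        hfarPf PL hPL G ∅ (SameDeg.refl G) (fun y z h => Or.inl h)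
        (fun x _ u hu => absurd hu (notMem_empty u))
        (by simp : Disjoint (∅ : Finset V) Pf)
      have hpairPf₁ : PairAdj G₁ Pf := by
        intro u hu v hv huv
        exact hPLadj (u, v)
          (Finset.mem_toList.mpr (mem_filter.mpr ⟨mem_product.mpr ⟨hu, hv⟩, huv⟩))
      set X : Finset V := S ∪ Pf with hXdef
      have hdisjSPf : Disjoint S Pf := by
        rw [disjoint_right]
        intro a ha
        exact hPfS a ha
      have hXcard : X.card = k := by
        rw [hXdef, card_union_of_disjoint hdisjSPf, hPfcard]
        omega
      have hSX : S ⊆ X := subset_union_left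
      have hPfX : Pf ⊆ X := subset_union_right
      obtain ⟨G₂, hsame₂, hres₂⟩ := cliqueBigs k hk _ G₁ S X rfl hSX (le_of_eq hXcard)
        (fun s hs => by rw [← hsame₁ s]; exact hhub7 s hs)
      rcases hres₂ with hclique | ⟨hpres₂, hpair₂⟩
      · exact ⟨G₂, hsame₁.trans hsame₂, hclique⟩
      obtain ⟨G₃, hsame₃, hpres₃, hadj₃⟩ := attachList θ S X hSX L G₂
        (by
          intro z hz
          have hzPf : z ∈ Pf := List.mem_toFinset.mpr hz
          refine ⟨hPfX hzPf, hPfS z hzPf, ?_⟩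
          rw [← hsame₂ z, ← hsame₁ z]
          have := hPfdeg z hzPf
          omega)
        (fun w hw => by
          rw [← hsame₂ w, ← hsame₁ w]
          exact hhubattach X (le_of_eq hXcard) w hw)
        (fun v hv => by
          rw [← hsame₂ v, ← hsame₁ v]
          exact hsmallS v (fun hc => hv (hSX hc)))
      refine ⟨G₃, hsame₁.trans (hsame₂.trans hsame₃), X, hXcard, ?_⟩
      intro a ha b hb hab
      rcases Finset.mem_union.mp ha with haS | haPf
      · rcases Finset.mem_union.mp hb with hbS | hbPf
        · exact hpres₃ a (hSX haS) b (hSX hbS) (hpair₂ a haS b hbS hab)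
        · exact (hadj₃ b (List.mem_toFinset.mp hbPf) a haS).symm
      · rcases Finset.mem_union.mp hb with hbS | hbPf
        · exact hadj₃ a (List.mem_toFinset.mp haPf) b hbS
        · refine hpres₃ a (hPfX haPf) b (hPfX hbPf) ?_
          exact hpres₂ a (hPfX haPf) b (hPfX hbPf) (hpairPf₁ a haPf b hbPf hab)

end CWS
namespace CWS

open Finset

open scoped Classical

/-- the extremal sequence ((n-1)^(k-2), (k-2)^(n-k+2)) -/
def TL (k n : ℕ) : List ℕ :=
  List.replicate (k-2) (n-1) ++ List.replicate (n-(k-2)) (k-2)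

lemma TL_length {k n : ℕ} (h : k - 2 ≤ n) : (TL k n).length = n := by
  simp [TL]
  omega

lemma pairwise_rep {α : Type*} {a : α} {R : α → α → Prop} (h : R a a) :
    ∀ m, (List.replicate m a).Pairwise R := by
  intro m
  induction m with
  | zero => exact List.Pairwise.nil
  | succ m ih =>
    rw [List.replicate_succ]
    refine List.Pairwise.cons ?_ ih
    intro b hb
    rw [List.eq_of_mem_replicate hb]
    exact h

lemma TL_sorted {k n : ℕ} (hk : 3 ≤ k) (hn : k ≤ n) : (TL k n).Pairwise (· ≥ ·) := by
  rw [TL, List.pairwise_append]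
  refine ⟨pairwise_rep (R := (· ≥ ·)) (le_refl _) _, pairwise_rep (R := (· ≥ ·)) (le_refl _) _, ?_⟩
  intro x hx y hy
  rw [List.eq_of_mem_replicate hx, List.eq_of_mem_replicate hy]
  omega

lemma TL_sum {k n : ℕ} : (TL k n).sum = (k-2) * (n-1) + (n-(k-2)) * (k-2) := by
  simp [TL, List.sum_replicate, smul_eq_mul]

/-- realization of TL : K_{k-2} joined to an independent set -/
def TG (k N : ℕ) : SimpleGraph (Fin N) where
  Adj x y := x ≠ y ∧ (x.val < k-2 ∨ y.val < k-2)
  symm := by refine ⟨?_⟩; rintro x y ⟨h1, h2⟩; exact ⟨h1.symm, h2.symm⟩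
  loopless := by refine ⟨?_⟩; rintro x ⟨h1, _⟩; exact h1 rfl

lemma card_filter_fin_lt (c N : ℕ) (h : c ≤ N) :
    ((Finset.univ : Finset (Fin N)).filter (fun w => w.val < c)).card = c := by
  have h1 : ((Finset.univ : Finset (Fin N)).filter (fun w => w.val < c)).card =
      (Finset.range c).card := by
    refine Finset.card_bij' (fun w _ => w.val)
      (fun i hi => ⟨i, lt_of_lt_of_le (Finset.mem_range.mp hi) h⟩) ?_ ?_ ?_ ?_
    · intro a ha
      exact Finset.mem_range.mpr (Finset.mem_filter.mp ha).2
    · intro i hi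
      exact Finset.mem_filter.mpr ⟨Finset.mem_univ _, Finset.mem_range.mp hi⟩
    · intro a _
      rfl
    · intro i _
      rfl
  rw [h1, Finset.card_range]

lemma TG_dg_small {k N : ℕ} {v : Fin N} (h : v.val < k-2) :
    dg (TG k N) v = N - 1 := by
  have hnbr : nbr (TG k N) v = Finset.univ.erase v := by
    ext w
    rw [mem_nbr, Finset.mem_erase]
    constructor
    · rintro ⟨h1, _⟩
      exact ⟨fun hc => h1 (hc ▸ rfl), Finset.mem_univ w⟩
    · rintro ⟨h1, _⟩
      exact ⟨fun hc => h1 (hc ▸ rfl), Or.inl h⟩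
  rw [dg, hnbr, Finset.card_erase_of_mem (Finset.mem_univ v), Finset.card_univ,
    Fintype.card_fin]

lemma TG_dg_big {k N : ℕ} (hc : k - 2 ≤ N) {v : Fin N} (h : ¬ v.val < k-2) :
    dg (TG k N) v = k - 2 := by
  have hnbr : nbr (TG k N) v = Finset.univ.filter (fun w => w.val < k-2) := by
    ext w
    rw [mem_nbr, Finset.mem_filter]
    constructor
    · rintro ⟨h1, h2 | h2⟩
      · exact absurd h2 h
      · exact ⟨Finset.mem_univ w, h2⟩
    · rintro ⟨_, h2⟩
      refine ⟨?_, Or.inr h2⟩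
      intro hvw
      rw [hvw] at h
      exact h h2
  rw [dg, hnbr, card_filter_fin_lt _ _ hc]

lemma TG_degMultiset {k N : ℕ} (hc : k - 2 ≤ N) :
    degMultiset (TG k N) = ((TL k N : List ℕ) : Multiset ℕ) := by
  have hsplit : (Finset.univ : Finset (Fin N)).val =
      (Finset.univ.filter (fun w : Fin N => w.val < k-2)).val +
      (Finset.univ.filter (fun w : Fin N => ¬ w.val < k-2)).val := by
    rw [Finset.filter_val, Finset.filter_val]
    exact (Multiset.filter_add_not _ _).symm
  have hA : ((Finset.univ.filter (fun w : Fin N => w.val < k-2)).val.map (gdeg (TG k N))) =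
      Multiset.replicate (k-2) (N-1) := by
    have h1 : ∀ w ∈ (Finset.univ.filter (fun w : Fin N => w.val < k-2)).val,
        gdeg (TG k N) w = N - 1 := by
      intro w hw
      rw [gdeg_eq_dg]
      exact TG_dg_small (Finset.mem_filter.mp (Finset.mem_val.mp hw)).2
    rw [Multiset.map_congr rfl h1, Multiset.map_const']
    have h2 : Multiset.card (Finset.univ.filter (fun w : Fin N => w.val < k-2)).val = k - 2 :=
      card_filter_fin_lt _ _ hc
    rw [h2]
  have hB : ((Finset.univ.filter (fun w : Fin N => ¬ w.val < k-2)).val.map (gdeg (TG k N))) =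
      Multiset.replicate (N-(k-2)) (k-2) := by
    have h1 : ∀ w ∈ (Finset.univ.filter (fun w : Fin N => ¬ w.val < k-2)).val,
        gdeg (TG k N) w = k - 2 := by
      intro w hw
      rw [gdeg_eq_dg]
      exact TG_dg_big hc (Finset.mem_filter.mp (Finset.mem_val.mp hw)).2
    rw [Multiset.map_congr rfl h1, Multiset.map_const']
    have h2 : Finset.univ.filter (fun w : Fin N => ¬ w.val < k-2) =
        Finset.univ \ Finset.univ.filter (fun w : Fin N => w.val < k-2) := by
      ext w
      simp
    have h3 : Multiset.card (Finset.univ.filter (fun w : Fin N => ¬ w.val < k-2)).val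
        = N - (k-2) := by
      show (Finset.univ.filter (fun w : Fin N => ¬ w.val < k-2)).card = N - (k-2)
      rw [h2, Finset.card_sdiff_of_subset (Finset.filter_subset _ _), card_filter_fin_lt _ _ hc,
        Finset.card_univ, Fintype.card_fin]
    rw [h3]
  have hR : ((TL k N : List ℕ) : Multiset ℕ) =
      Multiset.replicate (k-2) (N-1) + Multiset.replicate (N-(k-2)) (k-2) := by
    rw [TL, ← Multiset.coe_replicate, ← Multiset.coe_replicate, Multiset.coe_add]
  rw [degMultiset, hsplit, Multiset.map_add, hA, hB, hR]

lemma countP_replicate (p : ℕ → Bool) (m a : ℕ) :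
    (List.replicate m a).countP p = if p a then m else 0 := by
  induction m with
  | zero => simp
  | succ m ih =>
    rw [List.replicate_succ, List.countP_cons, ih]
    by_cases h : p a <;> simp [h]

lemma count_big_eq {V : Type*} [Fintype V] [DecidableEq V] (G : SimpleGraph V)
    (p : ℕ → Prop) [DecidablePred p] :
    ((Finset.univ : Finset V).filter (fun v => p (dg G v))).card =
      Multiset.countP p (degMultiset G) := by
  rw [degMultiset, Multiset.countP_map]
  rw [Finset.card, Finset.filter_val]
  congr 1
  apply Multiset.filter_congr
  intro v _
  rw [gdeg_eq_dg]

lemma sum_degMultiset {V : Type*} [Fintype V] [DecidableEq V] (G : SimpleGraph V) :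
    (degMultiset G).sum = ∑ v, dg G v := by
  rw [degMultiset]
  have h : Finset.univ.val.map (gdeg G) = Finset.univ.val.map (dg G) :=
    Multiset.map_congr rfl (fun v _ => gdeg_eq_dg G v)
  rw [h]
  rfl

lemma TG_not_pot (k N : ℕ) (hk : 3 ≤ k) (hkN : k ≤ N) (G' : SimpleGraph (Fin N))
    (hdeg : degMultiset G' = ((TL k N : List ℕ) : Multiset ℕ)) :
    ¬ ContainsSub (⊤ : SimpleGraph (Fin k)) G' := by
  rintro ⟨f, hinj, hadj⟩
  have himgcard : (Finset.univ.image f).card = k := by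
    rw [Finset.card_image_of_injective _ hinj, Finset.card_univ, Fintype.card_fin]
  have himg : ∀ i : Fin k, k ≤ dg G' (f i) + 1 := by
    intro i
    have hsub : (Finset.univ.image f).erase (f i) ⊆ nbr G' (f i) := by
      intro w hw
      obtain ⟨hwne, hwmem⟩ := Finset.mem_erase.mp hw
      obtain ⟨j, _, hj⟩ := Finset.mem_image.mp hwmem
      have hji : j ≠ i := by
        rintro rfl
        exact hwne hj.symm
      rw [mem_nbr, ← hj]
      exact hadj ((SimpleGraph.top_adj _ _).mpr hji.symm)
    have h1 := Finset.card_le_card hsub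
    rw [Finset.card_erase_of_mem (Finset.mem_image_of_mem f (Finset.mem_univ i)),
      himgcard] at h1
    have e1 : dg G' (f i) = (nbr G' (f i)).card := rfl
    omega
  have hle : k ≤ ((Finset.univ : Finset (Fin N)).filter
      (fun v => k ≤ dg G' v + 1)).card := by
    have hsub2 : Finset.univ.image f ⊆
        (Finset.univ : Finset (Fin N)).filter (fun v => k ≤ dg G' v + 1) := by
      intro w hw
      obtain ⟨j, _, hj⟩ := Finset.mem_image.mp hw
      refine Finset.mem_filter.mpr ⟨Finset.mem_univ w, ?_⟩
      rw [← hj]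
      exact himg j
    calc k = (Finset.univ.image f).card := himgcard.symm
    _ ≤ _ := Finset.card_le_card hsub2
  rw [count_big_eq G' (fun d => k ≤ d + 1), hdeg, Multiset.coe_countP,
    TL, List.countP_append, countP_replicate, countP_replicate] at hle
  have hd1 : decide (k ≤ (N-1) + 1) = true := by
    simp only [decide_eq_true_eq]
    omega
  have hd2 : decide (k ≤ (k-2) + 1) = false := by
    simp only [decide_eq_false_iff_not]
    omega
  rw [hd1, hd2] at hle
  simp at hle
  omega

lemma potnum_lb (k n : ℕ) (hk : 3 ≤ k) (hn : k ≤ n) :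
    (TL k n).sum + 1 ≤ potentialNumber (⊤ : SimpleGraph (Fin k)) n := by
  have hTLlen : (TL k n).length = n := TL_length (by omega)
  rw [potentialNumber]
  apply le_csInf
  · refine ⟨n*n + n + 2, ?_, ?_⟩
    · have h2 : n*(n+1) = n*n + n := by ring
      have h1 : Even (n*n + n) := h2 ▸ Nat.even_mul_succ_self n
      exact h1.add (by norm_num)
    · intro π hlen _ hgr hsum2
      exfalso
      obtain ⟨G, hG⟩ := hgr
      have h1 : π.sum = ∑ v, dg G v := by
        have h2 := congrArg Multiset.sum hG
        rw [sum_degMultiset, Multiset.sum_coe] at h2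
        exact h2.symm
      have h2 : ∑ v, dg G v ≤ π.length * π.length := by
        calc ∑ v, dg G v ≤ ∑ _v : Fin π.length, Fintype.card (Fin π.length) :=
              Finset.sum_le_sum (fun v _ => dg_le_card G v)
        _ = π.length * π.length := by
              rw [Finset.sum_const]
              simp
      have h3 : π.sum ≤ n * n := by
        rw [h1]
        calc ∑ v, dg G v ≤ π.length * π.length := h2
        _ = n * n := by rw [hlen]
      omega
  · intro b hb
    by_contra hcon
    push_neg at hcon
    obtain ⟨hbEven, hbprop⟩ := hb
    have hgraphic : IsGraphic (TL k n) := by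
      refine ⟨TG k ((TL k n).length), ?_⟩
      have h1 := TG_degMultiset (k := k) (N := (TL k n).length)
        (by rw [hTLlen]; omega)
      rw [h1]
      congr 1
      rw [hTLlen]
    have hpot := hbprop (TL k n) hTLlen (TL_sorted hk hn) hgraphic (by omega)
    obtain ⟨G', hG'deg, hcont⟩ := hpot
    refine TG_not_pot k ((TL k n).length) hk (by rw [hTLlen]; exact hn) G' ?_ hcont
    rw [hG'deg]
    congr 1
    rw [hTLlen]

lemma list_countP_ge (p : ℕ → Bool) : ∀ (π : List ℕ) (c : ℕ), c ≤ π.length →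
    (∀ i < c, p (π.getD i 0) = true) → c ≤ π.countP p := by
  intro π
  induction π with
  | nil =>
    intro c hc _
    simp at hc
    omega
  | cons d rest ih =>
    intro c hc hp
    cases c with
    | zero => omega
    | succ c' =>
      have h0 : p d = true := hp 0 (by omega)
      rw [List.countP_cons, h0]
      have h2 : c' ≤ rest.countP p := by
        refine ih c' (by simpa using hc) ?_
        intro i hi
        exact hp (i+1) (by omega)
      simp
      omega

end CWS
namespace CWS

open Finset

open scoped Classical

lemma degList_top (k : ℕ) (hk : 3 ≤ k) :
    ∀ i < k, (degList (⊤ : SimpleGraph (Fin k))).getD i 0 = k - 1 := by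
  have hmul : degMultiset (⊤ : SimpleGraph (Fin k)) = Multiset.replicate k (k-1) := by
    rw [degMultiset]
    have h1 : ∀ v ∈ (Finset.univ : Finset (Fin k)).val,
        gdeg (⊤ : SimpleGraph (Fin k)) v = k - 1 := by
      intro v _
      rw [gdeg_eq_dg]
      have hnbr : nbr (⊤ : SimpleGraph (Fin k)) v = Finset.univ.erase v := by
        ext w
        rw [mem_nbr, Finset.mem_erase, SimpleGraph.top_adj]
        constructor
        · intro h; exact ⟨fun hc => h (hc ▸ rfl), Finset.mem_univ w⟩
        · rintro ⟨h, _⟩; exact fun hc => h (hc ▸ rfl)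
      rw [dg, hnbr, Finset.card_erase_of_mem (Finset.mem_univ v), Finset.card_univ,
        Fintype.card_fin]
    rw [Multiset.map_congr rfl h1, Multiset.map_const']
    have h2 : Multiset.card (Finset.univ : Finset (Fin k)).val = k := by
      show (Finset.univ : Finset (Fin k)).card = k
      rw [Finset.card_univ, Fintype.card_fin]
    rw [h2]
  have hmem : ∀ x ∈ degList (⊤ : SimpleGraph (Fin k)), x = k - 1 := by
    intro x hx
    rw [degList, List.mem_reverse, Multiset.mem_sort, hmul] at hx
    exact Multiset.eq_of_mem_replicate hx
  have hlenD : (degList (⊤ : SimpleGraph (Fin k))).length = k := by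
    rw [degList, List.length_reverse, Multiset.length_sort, hmul, Multiset.card_replicate]
  intro i hi
  have hilt : i < (degList (⊤ : SimpleGraph (Fin k))).length := by omega
  rw [List.getD_eq_getElem _ _ hilt]
  exact hmem _ (List.getElem_mem hilt)

lemma harith (a b SG : ℕ)
    (h : 4*((a+1)*(b+a+2) + (b+2)*(a+1) + 1) ≤ 4*SG + (b+(a+3))) :
    8*(a+3)*(b+(a+3)) ≤ 4*SG + 17*(b+(a+3)) + 8*((a+3)*(a+3)) := by nlinarith [h]

theorem cliqueWeaklyStableAux (k : ℕ) (hk : 3 ≤ k) :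
    WeaklySigmaStable (⊤ : SimpleGraph (Fin k)) := by
  unfold WeaklySigmaStable
  intro ε hε
  refine ⟨1/4, by norm_num, (100 * k^3 * 4^(k+1) + 2)^13, ?_⟩
  intro n hn π hlen hsorted hgraphic hdegsuf hnotpot hsum
  exfalso
  obtain ⟨G, hG⟩ := hgraphic
  have hkn : k ≤ n := by
    have h1 := hdegsuf.1
    rwa [Fintype.card_fin, hlen] at h1
  have hdeg_entries : ∀ i < k, k ≤ π.getD i 0 + 1 := by
    intro i hi
    have h1 := hdegsuf.2 i (by rwa [Fintype.card_fin])
    rw [degList_top k hk i hi] at h1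
    omega
  have hcount1 : k ≤ π.countP (fun d => decide (k ≤ d + 1)) := by
    refine list_countP_ge _ π k (by omega) ?_
    intro i hi
    simp only [decide_eq_true_eq]
    exact hdeg_entries i hi
  have hdegk : k ≤ ((Finset.univ : Finset (Fin π.length)).filter
      (fun v => k ≤ dg G v + 1)).card := by
    rw [count_big_eq G (fun d => k ≤ d + 1), hG, Multiset.coe_countP]
    exact hcount1
  have hsumeq : π.sum = ∑ v, dg G v := by
    have h2 := congrArg Multiset.sum hG
    rw [sum_degMultiset, Multiset.sum_coe] at h2
    exact h2.symm
  have hpl := potnum_lb k n hk hkn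
  have hsum2 : 4 * ((TL k n).sum + 1) ≤ 4 * π.sum + n := by
    have hr1 : (((TL k n).sum + 1 : ℕ) : ℝ) ≤ (potentialNumber (⊤ : SimpleGraph (Fin k)) n : ℝ) := by
      exact_mod_cast hpl
    have hr3 : 4 * (((TL k n).sum + 1 : ℕ) : ℝ) ≤ 4 * (π.sum : ℝ) + (n : ℝ) := by
      have h4 : (0:ℝ) ≤ (n:ℝ) := Nat.cast_nonneg n
      linarith [hsum]
    exact_mod_cast hr3
  have hTL := TL_sum (k := k) (n := n)
  have hTsum : 8 * k * Fintype.card (Fin π.length) ≤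
      4 * (∑ v, dg G v) + 17 * Fintype.card (Fin π.length) + 8 * k * k := by
    have hApk : Fintype.card (Fin π.length) = n := by rw [Fintype.card_fin, hlen]
    rw [← hsumeq, hApk]
    obtain ⟨a, ha⟩ : ∃ a, k = a + 3 := ⟨k - 3, by omega⟩
    obtain ⟨b, hb⟩ : ∃ b, n = b + k := ⟨n - k, by omega⟩
    have e1 : k - 2 = a + 1 := by omega
    have e2 : n - 1 = b + a + 2 := by omega
    have e3 : n - (k - 2) = b + 2 := by omega
    rw [e3, e2, e1] at hTL
    rw [hTL] at hsum2
    rw [hb, ha] at hsum2 ⊢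
    have h8 : 8*(a+3)*((a+3)*(a+3)) = 8*((a+3)*(a+3)*(a+3)) := by ring
    calc 8*(a+3)*(b+(a+3)) ≤ 4*π.sum + 17*(b+(a+3)) + 8*((a+3)*(a+3)) :=
          harith a b π.sum hsum2
    _ = 4*π.sum + 17*(b+(a+3)) + 8*(a+3)*(a+3) := by ring
  have hcard : (100 * k^3 * 4^(k+1) + 2)^13 ≤ Fintype.card (Fin π.length) := by
    rw [Fintype.card_fin, hlen]
    exact hn
  obtain ⟨G', hsame, hclique⟩ := TstarGraph k hk G hcard hdegk hTsum
  refine hnotpot ⟨G', ?_, hclique.containsSub⟩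
  rw [← hsame.degMultiset_eq, hG]

end CWS

/-- **Theorem.** For every `k ≥ 3`, the complete graph `K_k` is weakly σ-stable. -/
theorem cliqueWeaklyStable (k : ℕ) (hk : 3 ≤ k) :
    WeaklySigmaStable (⊤ : SimpleGraph (Fin k)) :=
  CWS.cliqueWeaklyStableAux k hk
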